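/- arXiv:2008.00427 — 3 statements merged into one kernel-verified Lean document; each statement's English description precedes it below -/
import Mathlib

section
/- Let α be a permutation of {0,…,m−1} with RCISS(α) = (c_1,i_1,…,c_ℓ,i_ℓ). For j = 1,…,ℓ set U_{(c_j,i_j)} := R^B_{s_{j−1}+c_j+i_j} ⋯ R^B_{s_{j−1}+c_j+1} Q^B_{s_{j−1}+c_j} ⋯ Q^B_{s_{j−1}+1} and V_{(c_j,i_j)} := R_{s_{j−1}+1} ⋯ R_{s_{j−1}+c_j} Q_{s_{j−1}+c_j+1} ⋯ Q_{s_{j−1}+c_j+i_j}, and let U(λ) := U_{(c_ℓ,i_ℓ)} U_{(c_{ℓ−1},i_{ℓ−1})} ⋯ U_{(c_1,i_1)} and V(λ) := V_{(c_1,i_1)} V_{(c_2,i_2)} ⋯ V_{(c_ℓ,i_ℓ)}. Then U(λ)(e_1 ⊗ I_n) = Λ_α(λ) and (e_1^T ⊗ I_n)V(λ) = Ω_α(λ). -/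
open Polynomial Matrix
open scoped Classical

set_option synthInstance.maxHeartbeats 1000000
set_option maxHeartbeats 1000000

noncomputable section

namespace RatLin

/-- Block index type for `mn × mn` matrices viewed as `m × m` block matrices
with `n × n` blocks. -/
abbrev BI (m n : ℕ) := Fin m × Fin n

/-- Index type for `(mn + r) × (mn + r)` system matrices; `ρ` indexes the state space. -/
abbrev SI (m n : ℕ) (ρ : Type) := BI m n ⊕ ρ

/-! ### Elementary matrices and Fiedler factors -/

/-- The elementary matrix `M_i(X)`, `-m ≤ i ≤ m-1` (identity outside this range). -/
def elemM (m n : ℕ) (Xm : Matrix (Fin n) (Fin n) ℂ) (i : ℤ) :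
    Matrix (BI m n) (BI m n) ℂ :=
  Matrix.of fun p q =>
    (if i = 0 then
      (if p.1 = q.1 then (if (p.1 : ℕ) = m - 1 then Xm else (1 : Matrix (Fin n) (Fin n) ℂ)) else 0)
    else if i = -(m : ℤ) then
      (if p.1 = q.1 then (if (p.1 : ℕ) = 0 then Xm else 1) else 0)
    else if 0 < i ∧ i < (m : ℤ) then
      (if (p.1 : ℕ) = m - 1 - i.toNat ∧ (q.1 : ℕ) = m - 1 - i.toNat then Xm
       else if (p.1 : ℕ) = m - 1 - i.toNat ∧ (q.1 : ℕ) = m - i.toNat then 1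
       else if (p.1 : ℕ) = m - i.toNat ∧ (q.1 : ℕ) = m - 1 - i.toNat then 1
       else if (p.1 : ℕ) = m - i.toNat ∧ (q.1 : ℕ) = m - i.toNat then 0
       else if p.1 = q.1 then 1 else 0)
    else if -(m : ℤ) < i ∧ i < 0 then
      (if (p.1 : ℕ) = m - 1 - (-i).toNat ∧ (q.1 : ℕ) = m - 1 - (-i).toNat then 0
       else if (p.1 : ℕ) = m - 1 - (-i).toNat ∧ (q.1 : ℕ) = m - (-i).toNat then 1
       else if (p.1 : ℕ) = m - (-i).toNat ∧ (q.1 : ℕ) = m - 1 - (-i).toNat then 1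
       else if (p.1 : ℕ) = m - (-i).toNat ∧ (q.1 : ℕ) = m - (-i).toNat then Xm
       else if p.1 = q.1 then 1 else 0)
    else (if p.1 = q.1 then 1 else 0)) p.2 q.2

/-- The Fiedler matrix `M_i^P` of the matrix polynomial with coefficients `Ac`. -/
def MP (m n : ℕ) (Ac : ℕ → Matrix (Fin n) (Fin n) ℂ) (i : ℤ) :
    Matrix (BI m n) (BI m n) ℂ :=
  if 0 ≤ i then elemM m n (-(Ac i.toNat)) i else elemM m n (Ac (-i).toNat) i

/-- `M_t(Z)`: product of elementary matrices along an index tuple with a matrix assignment. -/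
def elemProd (m n : ℕ) (t : List ℤ) (Z : List (Matrix (Fin n) (Fin n) ℂ)) :
    Matrix (BI m n) (BI m n) ℂ :=
  ((t.zip Z).map fun s => elemM m n s.2 s.1).prod

/-- `M^P_t`: product of Fiedler matrices along an index tuple. -/
def MPprod (m n : ℕ) (Ac : ℕ → Matrix (Fin n) (Fin n) ℂ) (t : List ℤ) :
    Matrix (BI m n) (BI m n) ℂ :=
  (t.map (MP m n Ac)).prod

/-- `e_j ⊗ C` (`j` is a 1-based block index). -/
def eColM (m n : ℕ) {ρ : Type} (j : ℕ) (Cm : Matrix (Fin n) ρ ℂ) : Matrix (BI m n) ρ ℂ :=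
  Matrix.of fun p k => if (p.1 : ℕ) = j - 1 then Cm p.2 k else 0

/-- `e_j^T ⊗ B` (`j` is a 1-based block index). -/
def eRowM (m n : ℕ) {ρ : Type} (j : ℕ) (Bm : Matrix ρ (Fin n) ℂ) : Matrix ρ (BI m n) ℂ :=
  Matrix.of fun k q => if (q.1 : ℕ) = j - 1 then Bm k q.2 else 0

/-- `𝕄_i(X) = diag(M_i(X), I_r)`. -/
def sysElem (m n : ℕ) (ρ : Type) [DecidableEq ρ] [Fintype ρ]
    (Xm : Matrix (Fin n) (Fin n) ℂ) (i : ℤ) : Matrix (SI m n ρ) (SI m n ρ) ℂ :=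
  fromBlocks (elemM m n Xm i) 0 0 1

/-- `𝕄_t(Z)`. -/
def sysElemProd (m n : ℕ) (ρ : Type) [DecidableEq ρ] [Fintype ρ]
    (t : List ℤ) (Z : List (Matrix (Fin n) (Fin n) ℂ)) : Matrix (SI m n ρ) (SI m n ρ) ℂ :=
  ((t.zip Z).map fun s => sysElem m n ρ s.2 s.1).prod

/-- `𝕄^P_i = diag(M^P_i, I_r)`. -/
def sysMP (m n : ℕ) (ρ : Type) [DecidableEq ρ] [Fintype ρ]
    (Ac : ℕ → Matrix (Fin n) (Fin n) ℂ) (i : ℤ) : Matrix (SI m n ρ) (SI m n ρ) ℂ :=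
  fromBlocks (MP m n Ac i) 0 0 1

/-- `𝕄^P_t`. -/
def sysMPprod (m n : ℕ) (ρ : Type) [DecidableEq ρ] [Fintype ρ]
    (Ac : ℕ → Matrix (Fin n) (Fin n) ℂ) (t : List ℤ) : Matrix (SI m n ρ) (SI m n ρ) ℂ :=
  (t.map (sysMP m n ρ Ac)).prod

/-- The Fiedler matrices `𝕄^S_i` of the system matrix
`S(λ) = [[P(λ), C], [B, A - λE]]`. -/
def MS (m n : ℕ) (ρ : Type) [DecidableEq ρ] [Fintype ρ]
    (Ac : ℕ → Matrix (Fin n) (Fin n) ℂ) (Em Am : Matrix ρ ρ ℂ)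
    (Cm : Matrix (Fin n) ρ ℂ) (Bm : Matrix ρ (Fin n) ℂ) (i : ℤ) :
    Matrix (SI m n ρ) (SI m n ρ) ℂ :=
  if i = 0 then fromBlocks (MP m n Ac 0) (-(eColM m n m Cm)) (-(eRowM m n m Bm)) (-Am)
  else if i = -(m : ℤ) then fromBlocks (MP m n Ac i) 0 0 (-Em)
  else fromBlocks (MP m n Ac i) 0 0 1

/-- `𝕄^S_t`. -/
def MSprod (m n : ℕ) (ρ : Type) [DecidableEq ρ] [Fintype ρ]
    (Ac : ℕ → Matrix (Fin n) (Fin n) ℂ) (Em Am : Matrix ρ ρ ℂ)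
    (Cm : Matrix (Fin n) ρ ℂ) (Bm : Matrix ρ (Fin n) ℂ) (t : List ℤ) :
    Matrix (SI m n ρ) (SI m n ρ) ℂ :=
  (t.map (MS m n ρ Ac Em Am Cm Bm)).prod


/-! ### Index-tuple combinatorics -/

/-- The string of integers `(a : b) = (a, a+1, …, b)` (empty if `a > b`). -/
def seg (a b : ℕ) : List ℤ :=
  (List.range (b + 1 - a)).map fun j => ((a + j : ℕ) : ℤ)

/-- The chain `(t, t+1, …, t+p)`. -/
def consecChain (t : ℤ) (p : ℕ) : List ℤ := (List.range (p + 1)).map fun j => t + (j : ℤ)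

/-- The chain `(t+p, …, t+1, t)`. -/
def invChain (t : ℤ) (p : ℕ) : List ℤ := (List.range (p + 1)).map fun j => t + ((p - j : ℕ) : ℤ)

/-- The number `c_t(α)` of consecutive consecutions of `α` at `t` (` = -1` if `t ∉ α`). -/
def cNum (α : List ℤ) (t : ℤ) : ℤ :=
  if t ∈ α then (Nat.findGreatest (fun p => List.Sublist (consecChain t p) α) α.length : ℤ) else -1

/-- The number `i_t(α)` of consecutive inversions of `α` at `t` (` = -1` if `t ∉ α`). -/
def iNum (α : List ℤ) (t : ℤ) : ℤ :=
  if t ∈ α then (Nat.findGreatest (fun p => List.Sublist (invChain t p) α) α.length : ℤ) else -1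

/-- The successor infix property: between any two equal entries there is an
occurrence of the successor index.  (This formulation is invariant under shifts,
so it covers tuples with negative entries as well.) -/
def SIP (α : List ℤ) : Prop :=
  ∀ a b : Fin α.length, a < b → α.get a = α.get b →
    ∃ c : Fin α.length, a < c ∧ c < b ∧ α.get c = α.get a + 1

/-- `α` is (an index tuple that is) a permutation of `{lo, lo+1, …, lo+len-1}`. -/
def PermOn (α : List ℤ) (lo : ℤ) (len : ℕ) : Prop :=
  α.Perm ((List.range len).map fun j => lo + (j : ℤ))

/-- Validity of the data `(h, σ, τ, σ₁, σ₂, τ₁, τ₂)` defining a GFPR for degree `m`. -/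
def ValidGFPR (m h : ℕ) (σ τ σ1 σ2 τ1 τ2 : List ℤ) : Prop :=
  h + 1 ≤ m ∧
  PermOn σ 0 (h + 1) ∧ PermOn τ (-(m : ℤ)) (m - h) ∧
  (∀ x ∈ σ1, 0 ≤ x ∧ x < (h : ℤ)) ∧ (∀ x ∈ σ2, 0 ≤ x ∧ x < (h : ℤ)) ∧
  SIP (σ1 ++ σ ++ σ2) ∧
  (∀ x ∈ τ1, -(m : ℤ) ≤ x ∧ x ≤ -(h : ℤ) - 2) ∧
  (∀ x ∈ τ2, -(m : ℤ) ≤ x ∧ x ≤ -(h : ℤ) - 2) ∧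
  SIP (τ1 ++ τ ++ τ2)

/-- `Z` is a matrix assignment for the index tuple `t`. -/
def AssignLen {n : ℕ} (t : List ℤ) (Z : List (Matrix (Fin n) (Fin n) ℂ)) : Prop :=
  Z.length = t.length

/-- `Z` is a nonsingular matrix assignment for `t` (relative to degree `m`): every matrix
assigned to a position occupied by the index `0` or `-m` is nonsingular. -/
def NonsingAssign (m : ℕ) {n : ℕ} (t : List ℤ) (Z : List (Matrix (Fin n) (Fin n) ℂ)) : Prop :=
  Z.length = t.length ∧ ∀ s ∈ t.zip Z, (s.1 = 0 ∨ s.1 = -(m : ℤ)) → IsUnit s.2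

/-- A matrix assignment consisting of symmetric matrices. -/
def SymmAssign {n : ℕ} (Z : List (Matrix (Fin n) (Fin n) ℂ)) : Prop :=
  ∀ M ∈ Z, Mᵀ = M

/-- Shift every entry of an index tuple by `k`. -/
def shiftZ (t : List ℤ) (k : ℤ) : List ℤ := t.map (· + k)

/-- The admissible tuple `(h-1:h, h-3:h-2, …, p+1:p+2, 0:p)` of `{0,…,h}` with index `p`. -/
def admTuple (h p : ℕ) : List ℤ :=
  ((List.range ((h - p) / 2)).flatMap fun j => seg (h - 1 - 2 * j) (h - 2 * j)) ++ seg 0 p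

/-- `(0:p)_{rev_c} = (0:p-1, 0:p-2, …, 0:1, 0)`. -/
def revC (p : ℕ) : List ℤ := (List.range p).flatMap fun j => seg 0 (p - 1 - j)

/-- The symmetric complement of the admissible tuple of `{0,…,h}` with index `p`. -/
def symComp (h p : ℕ) : List ℤ :=
  ((List.range ((h - p) / 2)).map fun j => ((h - 1 - 2 * j : ℕ) : ℤ)) ++
    (if 1 ≤ p then revC p else [])

/-- The simple admissible tuple of `{0,…,h}` (index `0` for even `h`, `1` for odd `h`). -/
def simpleAdm (h : ℕ) : List ℤ := admTuple h (h % 2)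

/-- The symmetric complement of the simple admissible tuple of `{0,…,h}`. -/
def simpleSymComp (h : ℕ) : List ℤ := symComp h (h % 2)

/-- The tuple `(a_1 : h-2, a_2 : h-4, …, a_{⌊h/2⌋} : h - 2⌊h/2⌋)` in canonical form for `h`. -/
def canonForm (h : ℕ) (a : ℕ → ℕ) : List ℤ :=
  (List.range (h / 2)).flatMap fun j => seg (a (j + 1)) (h - 2 * (j + 1))

/-- `t` is an index tuple in canonical form for `h`. -/
def IsCanonicalForm (h : ℕ) (t : List ℤ) : Prop := ∃ a : ℕ → ℕ, t = canonForm h a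
/-! ### Matrix polynomials, rational matrices and Rosenbrock strong linearizations -/

/-- Embed a complex matrix as a constant matrix polynomial. -/
def cmat {ι κ : Type} (M : Matrix ι κ ℂ) : Matrix ι κ ℂ[X] := M.map Polynomial.C

/-- Embed a complex matrix as a constant rational matrix. -/
def rmat {ι κ : Type} (M : Matrix ι κ ℂ) : Matrix ι κ (RatFunc ℂ) :=
  M.map (algebraMap ℂ (RatFunc ℂ))

/-- Embed a matrix polynomial as a rational matrix. -/
def pmat {ι κ : Type} (M : Matrix ι κ ℂ[X]) : Matrix ι κ (RatFunc ℂ) :=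
  M.map (algebraMap ℂ[X] (RatFunc ℂ))

/-- Evaluation of a matrix polynomial at a point. -/
def evalM {ι κ : Type} (lam : ℂ) (M : Matrix ι κ ℂ[X]) : Matrix ι κ ℂ :=
  M.map (Polynomial.eval lam)

/-- `P(λ) = Σ_{i=0}^m λ^i A_i` as a matrix polynomial. -/
def polyPartC (m n : ℕ) (Ac : ℕ → Matrix (Fin n) (Fin n) ℂ) : Matrix (Fin n) (Fin n) ℂ[X] :=
  ∑ i ∈ Finset.range (m + 1), (X : ℂ[X]) ^ i • cmat (Ac i)

/-- `P(λ)` as a rational matrix. -/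
def polyPartR (m n : ℕ) (Ac : ℕ → Matrix (Fin n) (Fin n) ℂ) :
    Matrix (Fin n) (Fin n) (RatFunc ℂ) :=
  ∑ i ∈ Finset.range (m + 1), (RatFunc.X : RatFunc ℂ) ^ i • rmat (Ac i)

/-- The rational matrix `G(λ) = P(λ) + C (λE - A)⁻¹ B`. -/
def Gtransfer (m n : ℕ) (ρ : Type) [Fintype ρ] [DecidableEq ρ]
    (Ac : ℕ → Matrix (Fin n) (Fin n) ℂ) (Em Am : Matrix ρ ρ ℂ)
    (Cm : Matrix (Fin n) ρ ℂ) (Bm : Matrix ρ (Fin n) ℂ) :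
    Matrix (Fin n) (Fin n) (RatFunc ℂ) :=
  polyPartR m n Ac + rmat Cm * ((RatFunc.X : RatFunc ℂ) • rmat Em - rmat Am)⁻¹ * rmat Bm

/-- Pointwise evaluation of `G(λ) = P(λ) + C (λE - A)⁻¹ B`. -/
def Gpt (m n : ℕ) {ρ : Type} [Fintype ρ] [DecidableEq ρ]
    (Ac : ℕ → Matrix (Fin n) (Fin n) ℂ) (Em Am : Matrix ρ ρ ℂ)
    (Cm : Matrix (Fin n) ρ ℂ) (Bm : Matrix ρ (Fin n) ℂ) (lam : ℂ) :
    Matrix (Fin n) (Fin n) ℂ :=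
  (∑ i ∈ Finset.range (m + 1), lam ^ i • Ac i) + Cm * (lam • Em - Am)⁻¹ * Bm

/-- A scalar rational function is proper if its numerator degree does not
exceed its denominator degree. -/
def Proper (f : RatFunc ℂ) : Prop := f.num.degree ≤ f.denom.degree

/-- The value of a proper rational function at infinity. -/
def atInf (f : RatFunc ℂ) : ℂ :=
  if f.num.degree = f.denom.degree then f.num.leadingCoeff / f.denom.leadingCoeff else 0

/-- A biproper rational matrix: proper with nonsingular value at infinity. -/
def Biproper {ι : Type} [Fintype ι] [DecidableEq ι] (O : Matrix ι ι (RatFunc ℂ)) : Prop :=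
  (∀ i j, Proper (O i j)) ∧ IsUnit (Matrix.of fun i j => atInf (O i j))

/-- `diag(I_{(m-1)n}, W)` with `W` occupying the last diagonal block (polynomial entries). -/
def diagLastP (m n : ℕ) (W : Matrix (Fin n) (Fin n) ℂ[X]) : Matrix (BI m n) (BI m n) ℂ[X] :=
  Matrix.of fun p q =>
    if (p.1 : ℕ) = m - 1 ∧ (q.1 : ℕ) = m - 1 then W p.2 q.2
    else if p = q then 1 else 0

/-- `diag(I_{(m-1)n}, W)` with `W` occupying the last diagonal block (rational entries). -/
def diagLastR (m n : ℕ) (W : Matrix (Fin n) (Fin n) (RatFunc ℂ)) :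
    Matrix (BI m n) (BI m n) (RatFunc ℂ) :=
  Matrix.of fun p q =>
    if (p.1 : ℕ) = m - 1 ∧ (q.1 : ℕ) = m - 1 then W p.2 q.2
    else if p = q then 1 else 0

/-- The system matrix `S(λ) = [[P(λ), C], [B, A - λE]]` (size `(n+r) × (n+r)`). -/
def sysS (m n : ℕ) (ρ : Type) (Ac : ℕ → Matrix (Fin n) (Fin n) ℂ)
    (Em Am : Matrix ρ ρ ℂ) (Cm : Matrix (Fin n) ρ ℂ) (Bm : Matrix ρ (Fin n) ℂ) :
    Matrix (Fin n ⊕ ρ) (Fin n ⊕ ρ) ℂ[X] :=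
  fromBlocks (polyPartC m n Ac) (cmat Cm) (cmat Bm) (cmat Am - (X : ℂ[X]) • cmat Em)

/-- `diag(I_{(m-1)n}, S(λ))` with `S(λ)` occupying the trailing `(n+r) × (n+r)` corner. -/
def sysDiagIS (m n : ℕ) (ρ : Type) (Ac : ℕ → Matrix (Fin n) (Fin n) ℂ)
    (Em Am : Matrix ρ ρ ℂ) (Cm : Matrix (Fin n) ρ ℂ) (Bm : Matrix ρ (Fin n) ℂ) :
    Matrix (SI m n ρ) (SI m n ρ) ℂ[X] :=
  fromBlocks (diagLastP m n (polyPartC m n Ac))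
    (Matrix.of fun p k => if (p.1 : ℕ) = m - 1 then Polynomial.C (Cm p.2 k) else 0)
    (Matrix.of fun k q => if (q.1 : ℕ) = m - 1 then Polynomial.C (Bm k q.2) else 0)
    (cmat Am - (X : ℂ[X]) • cmat Em)

/-- Minimality (equivalently, irreducibility) of the realization
`G(λ) = P(λ) + C (λE - A)⁻¹ B`. -/
def MinimalReal (n : ℕ) (ρ : Type) [Fintype ρ] [DecidableEq ρ]
    (Em Am : Matrix ρ ρ ℂ) (Cm : Matrix (Fin n) ρ ℂ) (Bm : Matrix ρ (Fin n) ℂ) : Prop :=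
  ∀ lam : ℂ, (Matrix.fromCols Bm (Am - lam • Em)).rank = Fintype.card ρ ∧
    (Matrix.fromRows Cm (Am - lam • Em)).rank = Fintype.card ρ

/-- `L` is a Rosenbrock strong linearization of
`G(λ) = P(λ) + C (λE - A)⁻¹ B` (Definition 2.4 of the paper). -/
def IsRosenbrock (m n : ℕ) (ρ : Type) [Fintype ρ] [DecidableEq ρ]
    (Ac : ℕ → Matrix (Fin n) (Fin n) ℂ) (Em Am : Matrix ρ ρ ℂ)
    (Cm : Matrix (Fin n) ρ ℂ) (Bm : Matrix ρ (Fin n) ℂ)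
    (L : Matrix (SI m n ρ) (SI m n ρ) ℂ[X]) : Prop :=
  ∃ (Xc Yc : Matrix (BI m n) (BI m n) ℂ) (Cc : Matrix (BI m n) ρ ℂ)
    (Bc : Matrix ρ (BI m n) ℂ) (H K : Matrix ρ ρ ℂ),
    -- `L(λ) = [[𝒳 - λ𝒴, 𝒞], [ℬ, H - λK]]` with `K` nonsingular
    IsUnit K ∧
    L = fromBlocks (cmat Xc - (X : ℂ[X]) • cmat Yc) (cmat Cc) (cmat Bc)
          (cmat H - (X : ℂ[X]) • cmat K) ∧
    -- `L` is an irreducible system matrix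
    (∀ lam : ℂ, (Matrix.fromCols Bc (H - lam • K)).rank = Fintype.card ρ ∧
      (Matrix.fromRows Cc (H - lam • K)).rank = Fintype.card ρ) ∧
    -- condition (a): unimodular equivalence to `diag(I_{(m-1)n}, S(λ))`
    (∃ (U V : Matrix (BI m n) (BI m n) ℂ[X]) (U0 V0 : Matrix ρ ρ ℂ),
      IsUnit U.det ∧ IsUnit V.det ∧ IsUnit U0 ∧ IsUnit V0 ∧
      fromBlocks U 0 0 (cmat U0) * L * fromBlocks V 0 0 (cmat V0) =
        sysDiagIS m n ρ Ac Em Am Cm Bm) ∧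
    -- condition (b): biproper equivalence of `λ⁻¹𝔾(λ)` to `diag(I_{(m-1)n}, λ^{-m}G(λ))`
    (∃ Ol Or : Matrix (BI m n) (BI m n) (RatFunc ℂ),
      Biproper Ol ∧ Biproper Or ∧
      Ol * ((RatFunc.X : RatFunc ℂ)⁻¹ •
          (rmat Xc - (RatFunc.X : RatFunc ℂ) • rmat Yc +
            rmat Cc * ((RatFunc.X : RatFunc ℂ) • rmat K - rmat H)⁻¹ * rmat Bc)) * Or =
        diagLastR m n (((RatFunc.X : RatFunc ℂ) ^ m)⁻¹ • Gtransfer m n ρ Ac Em Am Cm Bm))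
/-! ### GFPR pencils -/

/-- The GFPR `L(λ) = M_{(τ₁,σ₁)}(Y₁,X₁) (λ M^P_τ - M^P_σ) M_{(σ₂,τ₂)}(X₂,Y₂)` of `P(λ)`. -/
def gfprP (m n : ℕ) (Ac : ℕ → Matrix (Fin n) (Fin n) ℂ)
    (σ τ σ1 σ2 τ1 τ2 : List ℤ) (X1 X2 Y1 Y2 : List (Matrix (Fin n) (Fin n) ℂ)) :
    Matrix (BI m n) (BI m n) ℂ[X] :=
  cmat (elemProd m n (τ1 ++ σ1) (Y1 ++ X1)) *
    ((X : ℂ[X]) • cmat (MPprod m n Ac τ) - cmat (MPprod m n Ac σ)) *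
    cmat (elemProd m n (σ2 ++ τ2) (X2 ++ Y2))

/-- The GFPR `𝕃(λ) = 𝕄_{(τ₁,σ₁)}(Y₁,X₁) (λ 𝕄^S_τ - 𝕄^S_σ) 𝕄_{(σ₂,τ₂)}(X₂,Y₂)` of `G(λ)`. -/
def gfprG (m n : ℕ) (ρ : Type) [Fintype ρ] [DecidableEq ρ]
    (Ac : ℕ → Matrix (Fin n) (Fin n) ℂ) (Em Am : Matrix ρ ρ ℂ)
    (Cm : Matrix (Fin n) ρ ℂ) (Bm : Matrix ρ (Fin n) ℂ)
    (σ τ σ1 σ2 τ1 τ2 : List ℤ) (X1 X2 Y1 Y2 : List (Matrix (Fin n) (Fin n) ℂ)) :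
    Matrix (SI m n ρ) (SI m n ρ) ℂ[X] :=
  cmat (sysElemProd m n ρ (τ1 ++ σ1) (Y1 ++ X1)) *
    ((X : ℂ[X]) • cmat (MSprod m n ρ Ac Em Am Cm Bm τ) - cmat (MSprod m n ρ Ac Em Am Cm Bm σ)) *
    cmat (sysElemProd m n ρ (σ2 ++ τ2) (X2 ++ Y2))

/-- `L` belongs to the family of GFPRs of `P(λ)`. -/
def IsGFPRofP (m n : ℕ) (Ac : ℕ → Matrix (Fin n) (Fin n) ℂ)
    (L : Matrix (BI m n) (BI m n) ℂ[X]) : Prop :=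
  ∃ (h : ℕ) (σ τ σ1 σ2 τ1 τ2 : List ℤ) (X1 X2 Y1 Y2 : List (Matrix (Fin n) (Fin n) ℂ)),
    ValidGFPR m h σ τ σ1 σ2 τ1 τ2 ∧
    AssignLen σ1 X1 ∧ AssignLen σ2 X2 ∧ AssignLen τ1 Y1 ∧ AssignLen τ2 Y2 ∧
    L = gfprP m n Ac σ τ σ1 σ2 τ1 τ2 X1 X2 Y1 Y2

/-- `LL` belongs to the family of GFPRs of `G(λ)`. -/
def IsGFPRofG (m n : ℕ) (ρ : Type) [Fintype ρ] [DecidableEq ρ]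
    (Ac : ℕ → Matrix (Fin n) (Fin n) ℂ) (Em Am : Matrix ρ ρ ℂ)
    (Cm : Matrix (Fin n) ρ ℂ) (Bm : Matrix ρ (Fin n) ℂ)
    (LL : Matrix (SI m n ρ) (SI m n ρ) ℂ[X]) : Prop :=
  ∃ (h : ℕ) (σ τ σ1 σ2 τ1 τ2 : List ℤ) (X1 X2 Y1 Y2 : List (Matrix (Fin n) (Fin n) ℂ)),
    ValidGFPR m h σ τ σ1 σ2 τ1 τ2 ∧
    AssignLen σ1 X1 ∧ AssignLen σ2 X2 ∧ AssignLen τ1 Y1 ∧ AssignLen τ2 Y2 ∧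
    LL = gfprG m n ρ Ac Em Am Cm Bm σ τ σ1 σ2 τ1 τ2 X1 X2 Y1 Y2

/-! ### Structured pencils -/

/-- Pointwise `T`-even: `R(-λ)ᵀ = R(λ)`. -/
def TEvenP {ι : Type} (M : Matrix ι ι ℂ[X]) : Prop :=
  ∀ lam : ℂ, (evalM (-lam) M)ᵀ = evalM lam M

/-- Pointwise `T`-odd: `R(-λ)ᵀ = -R(λ)`. -/
def TOddP {ι : Type} (M : Matrix ι ι ℂ[X]) : Prop :=
  ∀ lam : ℂ, (evalM (-lam) M)ᵀ = -(evalM lam M)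

/-- A quasi-identity matrix `ε₁ I_n ⊕ ⋯ ⊕ ε_m I_n`. -/
def quasiId (m n : ℕ) (ε : Fin m → ℂ) : Matrix (BI m n) (BI m n) ℂ :=
  Matrix.of fun p q => if p = q then ε p.1 else 0

/-- The parameters of a quasi-identity matrix are signs. -/
def IsSign {m : ℕ} (ε : Fin m → ℂ) : Prop := ∀ i, ε i = 1 ∨ ε i = -1

/-- `diag(Q, I_r)` for a quasi-identity matrix `Q`, as a constant matrix polynomial. -/
def sysQuasi (m n : ℕ) (ρ : Type) [DecidableEq ρ] (ε : Fin m → ℂ) :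
    Matrix (SI m n ρ) (SI m n ρ) ℂ[X] :=
  fromBlocks (cmat (quasiId m n ε)) 0 0 1

/-- `J = [[0, I_ℓ], [-I_ℓ, 0]]`. -/
def Jmat (l : ℕ) : Matrix (Fin l ⊕ Fin l) (Fin l ⊕ Fin l) ℂ :=
  fromBlocks 0 1 (-1) 0

/-- `𝕁_{mn,r} = diag(I_{mn}, J)` as a constant matrix polynomial. -/
def sysJ (m n l : ℕ) : Matrix (SI m n (Fin l ⊕ Fin l)) (SI m n (Fin l ⊕ Fin l)) ℂ[X] :=
  fromBlocks 1 0 0 (cmat (Jmat l))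

/-- Block symmetry of a system pencil `[[A, u ⊗ X'], [vᵀ ⊗ Y', Z']]`:
the leading block matrix is block symmetric and `u = v`. -/
def IsBlockSymSys (m n : ℕ) (ρ : Type) (Amat : Matrix (SI m n ρ) (SI m n ρ) ℂ[X]) : Prop :=
  (∀ p q : BI m n, Amat (Sum.inl p) (Sum.inl q) = Amat (Sum.inl (q.1, p.2)) (Sum.inl (p.1, q.2))) ∧
  ∃ (u : Fin m → ℂ[X]) (Xc : Matrix (Fin n) ρ ℂ[X]) (Yc : Matrix ρ (Fin n) ℂ[X]),
    (∀ p k, Amat (Sum.inl p) (Sum.inr k) = u p.1 * Xc p.2 k) ∧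
    (∀ k q, Amat (Sum.inr k) (Sum.inl q) = u q.1 * Yc k q.2)

/-! ### Null space bases -/

/-- The columns of `Z` form a basis of the right null space of `M`. -/
def ColBasisRight {ι κ : Type} [Fintype ι] [Fintype κ] [DecidableEq ι] [DecidableEq κ]
    (M : Matrix ι ι ℂ) (Z : Matrix ι κ ℂ) : Prop :=
  M * Z = 0 ∧ Z.rank = Fintype.card κ ∧
    ∀ v : ι → ℂ, M *ᵥ v = 0 → ∃ c : κ → ℂ, v = Z *ᵥ c

/-- The columns of `Z` form a basis of the left null space of `M`. -/
def ColBasisLeft {ι κ : Type} [Fintype ι] [Fintype κ] [DecidableEq ι] [DecidableEq κ]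
    (M : Matrix ι ι ℂ) (Z : Matrix ι κ ℂ) : Prop :=
  (∀ j : κ, Matrix.vecMul (fun i => Z i j) M = 0) ∧ Z.rank = Fintype.card κ ∧
    ∀ v : ι → ℂ, Matrix.vecMul v M = 0 → ∃ c : κ → ℂ, v = Z *ᵥ c

/-! ### Type-1 right index tuples (via column standard forms) -/

/-- One commutation step: adjacent entries whose absolute difference exceeds `1` commute. -/
def SwapStep (s t : List ℤ) : Prop :=
  ∃ (l1 l2 : List ℤ) (x y : ℤ), 1 < |x - y| ∧
    s = l1 ++ x :: y :: l2 ∧ t = l1 ++ y :: x :: l2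

/-- Equivalence of index tuples generated by commutation of distant indices. -/
def TupleEquiv : List ℤ → List ℤ → Prop := Relation.EqvGen SwapStep

/-- The tuple in column standard form determined by the ascending breakpoint
list `bp = [a₁, …, a_d]`: `(a_{d-1}+1 : a_d, …, a₁+1 : a₂, 0 : a₁)`. -/
def breaksTuple (bp : List ℕ) : List ℤ :=
  (List.range bp.length).reverse.flatMap fun j =>
    seg (if j = 0 then 0 else bp.getD (j - 1) 0 + 1) (bp.getD j 0)

/-- `bp` is a valid breakpoint list for a permutation of `{0, …, k}`. -/
def IsBreaks (k : ℕ) (bp : List ℕ) : Prop :=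
  bp.Chain' (· < ·) ∧ bp.getLast? = some k

/-- `bp` gives the column standard form of the index tuple `α` (a permutation of `{0,…,k}`). -/
def CsfBreaks (k : ℕ) (α : List ℤ) (bp : List ℕ) : Prop :=
  IsBreaks k bp ∧ TupleEquiv α (breaksTuple bp)

/-- `s` is a right index of type-1 relative to the csf with breakpoints `bp`. -/
def IsRT1 (bp : List ℕ) (s : ℕ) : Prop :=
  (s = 0 ∧ 0 ∉ bp) ∨ (s ≠ 0 ∧ (s - 1) ∈ bp ∧ s ∉ bp)

/-- Breakpoints of the simple tuple `z_r(α, s)` associated with `(α, s)`. -/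
def zrNext (bp : List ℕ) (s : ℕ) : List ℕ :=
  if s = 0 then 0 :: bp else bp.map fun a => if a = s - 1 then s else a

/-- Iterated validity of a tuple of right indices of type-1. -/
def RT1Chain : List ℕ → List ℕ → Prop
  | _, [] => True
  | bp, s :: rest => IsRT1 bp s ∧ RT1Chain (zrNext bp s) rest

/-- `t` is a right index tuple of type-1 relative to the permutation `α` of `{0, …, k}`. -/
def IsRightT1Tuple (k : ℕ) (α : List ℤ) (t : List ℤ) : Prop :=
  ∃ (bp : List ℕ) (tn : List ℕ), CsfBreaks k α bp ∧
    t = tn.map (fun j => (j : ℤ)) ∧ RT1Chain bp tn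
/-! ### RCISS, the matrices `Λ_α`, `Ω_α`, and the unimodular factors `Q_i`, `R_i` -/

/-- `α` has a consecution at `j` (i.e. `j` occurs before `j+1` in `α`). -/
def hasConsec (α : List ℤ) (j : ℕ) : Prop :=
  α.idxOf ((j : ℕ) : ℤ) < α.idxOf (((j : ℕ) : ℤ) + 1)

/-- Whether position `t` (counted from the top, i.e. `t = m - 2 - j`) is a consecution
position of the pattern `(c₁, i₁, c₂, i₂, …)`. -/
def patConsec : List (ℕ × ℕ) → ℕ → Prop
  | [], _ => False
  | (c, i) :: rest, t => t < c ∨ (c + i ≤ t ∧ patConsec rest (t - (c + i)))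

/-- `RCISS(α) = (c₁, i₁, …, c_ℓ, i_ℓ)`: the reverse consecution-inversion structure
sequence of the permutation `α` of `{0, …, m-1}`. -/
def IsRCISS (m : ℕ) (α : List ℤ) (L : List (ℕ × ℕ)) : Prop :=
  ((L.map fun s => s.1 + s.2).sum = m - 1) ∧
  ∀ j : ℕ, j + 1 < m → (hasConsec α j ↔ patConsec L (m - 2 - j))

/-- The exponent (if any) of the block in row `p` of `Λ_α` (built from the RCISS pattern). -/
def lamExp : List (ℕ × ℕ) → ℕ → ℕ → Option ℕ
  | [], _, _ => none
  | [(c, i)], acc, p =>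
      if p < c then some (acc + p) else if p = c + i then some (acc + c) else none
  | (c, i) :: rest, acc, p =>
      if p < c then some (acc + p)
      else if p < c + i then none
      else lamExp rest (acc + c) (p - (c + i))

/-- The exponent (if any) of the block in column `q` of `Ω_α`. -/
def omExp : List (ℕ × ℕ) → ℕ → ℕ → Option ℕ
  | [], _, _ => none
  | [(c, i)], acc, p =>
      if p < c then none
      else if p < c + i then some (acc + (p - c))
      else if p = c + i then some (acc + i) else none
  | (c, i) :: rest, acc, p =>
      if p < c then none
      else if p < c + i then some (acc + (p - c))
      else omExp rest (acc + i) (p - (c + i))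

/-- The `mn × n` matrix polynomial `Λ_α(λ)`. -/
def LamMat (m n : ℕ) (L : List (ℕ × ℕ)) : Matrix (BI m n) (Fin n) ℂ[X] :=
  Matrix.of fun p b =>
    match lamExp L 0 (p.1 : ℕ) with
    | some e => if p.2 = b then (X : ℂ[X]) ^ e else 0
    | none => 0

/-- The `n × mn` matrix polynomial `Ω_α(λ)`. -/
def OmMat (m n : ℕ) (L : List (ℕ × ℕ)) : Matrix (Fin n) (BI m n) ℂ[X] :=
  Matrix.of fun a q =>
    match omExp L 0 (q.1 : ℕ) with
    | some e => if a = q.2 then (X : ℂ[X]) ^ e else 0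
    | none => 0

/-- `e₁ ⊗ I_n` as an `mn × n` matrix polynomial. -/
def e1ColI (m n : ℕ) : Matrix (BI m n) (Fin n) ℂ[X] :=
  Matrix.of fun p b => if (p.1 : ℕ) = 0 ∧ p.2 = b then 1 else 0

/-- `e₁ᵀ ⊗ I_n` as an `n × mn` matrix polynomial. -/
def e1RowI (m n : ℕ) : Matrix (Fin n) (BI m n) ℂ[X] :=
  Matrix.of fun a q => if (q.1 : ℕ) = 0 ∧ a = q.2 then 1 else 0

/-- The Horner shift `P_k(λ) = A_{m-k} + λ A_{m-k+1} + ⋯ + λ^k A_m`. -/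
def horner (m n : ℕ) (Ac : ℕ → Matrix (Fin n) (Fin n) ℂ) (k : ℕ) :
    Matrix (Fin n) (Fin n) ℂ[X] :=
  ∑ j ∈ Finset.range (k + 1), (X : ℂ[X]) ^ j • cmat (Ac (m - k + j))

/-- The unimodular matrix polynomial `Q_i(λ)` (`1 ≤ i ≤ m-1`, 1-based block index). -/
def Qmat (m n : ℕ) (i : ℕ) : Matrix (BI m n) (BI m n) ℂ[X] :=
  Matrix.of fun p q =>
    if p.1 = q.1 then (if p.2 = q.2 then 1 else 0)
    else if (p.1 : ℕ) = i - 1 ∧ (q.1 : ℕ) = i then (if p.2 = q.2 then (X : ℂ[X]) else 0)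
    else 0

/-- The block transpose `Q_i(λ)^B`. -/
def QBmat (m n : ℕ) (i : ℕ) : Matrix (BI m n) (BI m n) ℂ[X] :=
  Matrix.of fun p q =>
    if p.1 = q.1 then (if p.2 = q.2 then 1 else 0)
    else if (p.1 : ℕ) = i ∧ (q.1 : ℕ) = i - 1 then (if p.2 = q.2 then (X : ℂ[X]) else 0)
    else 0

/-- The unimodular matrix polynomial `R_i(λ)` (block symmetric: `R_i^B = R_i`). -/
def Rmat (m n : ℕ) (Ac : ℕ → Matrix (Fin n) (Fin n) ℂ) (i : ℕ) :
    Matrix (BI m n) (BI m n) ℂ[X] :=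
  Matrix.of fun p q =>
    if (p.1 : ℕ) = i - 1 ∧ (q.1 : ℕ) = i - 1 then 0
    else if (p.1 : ℕ) = i - 1 ∧ (q.1 : ℕ) = i then (if p.2 = q.2 then 1 else 0)
    else if (p.1 : ℕ) = i ∧ (q.1 : ℕ) = i - 1 then (if p.2 = q.2 then 1 else 0)
    else if (p.1 : ℕ) = i ∧ (q.1 : ℕ) = i then horner m n Ac i p.2 q.2
    else if p.1 = q.1 ∧ p.2 = q.2 then 1 else 0

/-- `U_{(c,i)} = R^B_{s+c+i} ⋯ R^B_{s+c+1} Q^B_{s+c} ⋯ Q^B_{s+1}`. -/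
def Ufac (m n : ℕ) (Ac : ℕ → Matrix (Fin n) (Fin n) ℂ) (s c i : ℕ) :
    Matrix (BI m n) (BI m n) ℂ[X] :=
  (((List.range i).map fun t => Rmat m n Ac (s + c + i - t)).prod) *
    (((List.range c).map fun t => QBmat m n (s + c - t)).prod)

/-- `V_{(c,i)} = R_{s+1} ⋯ R_{s+c} Q_{s+c+1} ⋯ Q_{s+c+i}`. -/
def Vfac (m n : ℕ) (Ac : ℕ → Matrix (Fin n) (Fin n) ℂ) (s c i : ℕ) :
    Matrix (BI m n) (BI m n) ℂ[X] :=
  (((List.range c).map fun t => Rmat m n Ac (s + 1 + t)).prod) *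
    (((List.range i).map fun t => Qmat m n (s + c + 1 + t)).prod)

/-- `U(λ) = U_{(c_ℓ,i_ℓ)} ⋯ U_{(c₁,i₁)}` (with running partial sums `s_{j-1}`). -/
def Uprod (m n : ℕ) (Ac : ℕ → Matrix (Fin n) (Fin n) ℂ) :
    List (ℕ × ℕ) → ℕ → Matrix (BI m n) (BI m n) ℂ[X]
  | [], _ => 1
  | (c, i) :: rest, s => Uprod m n Ac rest (s + c + i) * Ufac m n Ac s c i

/-- `V(λ) = V_{(c₁,i₁)} ⋯ V_{(c_ℓ,i_ℓ)}`. -/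
def Vprod (m n : ℕ) (Ac : ℕ → Matrix (Fin n) (Fin n) ℂ) :
    List (ℕ × ℕ) → ℕ → Matrix (BI m n) (BI m n) ℂ[X]
  | [], _ => 1
  | (c, i) :: rest, s => Vfac m n Ac s c i * Vprod m n Ac rest (s + c + i)

/-- Block lower triangular with identity diagonal blocks. -/
def BlockLowerUni (m n : ℕ) (L : Matrix (BI m n) (BI m n) ℂ[X]) : Prop :=
  (∀ p q : BI m n, p.1 < q.1 → L p q = 0) ∧
  (∀ p q : BI m n, p.1 = q.1 → L p q = if p.2 = q.2 then 1 else 0)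

/-- Block upper triangular with identity diagonal blocks. -/
def BlockUpperUni (m n : ℕ) (U : Matrix (BI m n) (BI m n) ℂ[X]) : Prop :=
  (∀ p q : BI m n, q.1 < p.1 → U p q = 0) ∧
  (∀ p q : BI m n, p.1 = q.1 → U p q = if p.2 = q.2 then 1 else 0)

/-- `diag(I_{(m-1)n}, 0_n)`. -/
def diagZeroLast (m n : ℕ) : Matrix (BI m n) (BI m n) ℂ[X] :=
  Matrix.of fun p q => if p = q ∧ (p.1 : ℕ) ≠ m - 1 then 1 else 0
/-! ### Auxiliary machinery for the proof -/

/-- Entry function of a "scalar block" given by an optional exponent. -/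
def oent {n : ℕ} (o : Option ℕ) (a b : Fin n) : ℂ[X] :=
  match o with
  | some e => if a = b then (X : ℂ[X]) ^ e else 0
  | none => 0

@[simp] lemma oent_none {n : ℕ} (a b : Fin n) : oent none a b = 0 := rfl

@[simp] lemma oent_some {n : ℕ} (e : ℕ) (a b : Fin n) :
    oent (some e) a b = if a = b then (X : ℂ[X]) ^ e else 0 := rfl

lemma oent_delta {n : ℕ} (o : Option ℕ) (a b : Fin n) :
    (if a = b then (1 : ℂ[X]) else 0) * oent o b b = oent o a b := by
  cases o <;> by_cases h : a = b <;> simp [oent, h]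

lemma oent_delta' {n : ℕ} (o : Option ℕ) (a b : Fin n) :
    oent o a a * (if a = b then (1 : ℂ[X]) else 0) = oent o a b := by
  cases o <;> by_cases h : a = b <;> simp [oent, h]

/-- A block column of powers of `X` prescribed by `g`. -/
def SCol (m n : ℕ) (g : ℕ → Option ℕ) : Matrix (BI m n) (Fin n) ℂ[X] :=
  Matrix.of fun p b => oent (g (p.1 : ℕ)) p.2 b

/-- A block row of powers of `X` prescribed by `g`. -/
def SRow (m n : ℕ) (g : ℕ → Option ℕ) : Matrix (Fin n) (BI m n) ℂ[X] :=
  Matrix.of fun a q => oent (g (q.1 : ℕ)) a q.2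

@[simp] lemma SCol_apply (m n : ℕ) (g : ℕ → Option ℕ) (p : BI m n) (b : Fin n) :
    SCol m n g p b = oent (g (p.1 : ℕ)) p.2 b := rfl

@[simp] lemma SRow_apply (m n : ℕ) (g : ℕ → Option ℕ) (a : Fin n) (q : BI m n) :
    SRow m n g a q = oent (g (q.1 : ℕ)) a q.2 := rfl

lemma SCol_congr (m n : ℕ) (g g' : ℕ → Option ℕ) (h : ∀ t, g t = g' t) :
    SCol m n g = SCol m n g' := by
  have : g = g' := funext h
  rw [this]

lemma SRow_congr (m n : ℕ) (g g' : ℕ → Option ℕ) (h : ∀ t, g t = g' t) :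
    SRow m n g = SRow m n g' := by
  have : g = g' := funext h
  rw [this]

lemma sum_oent {n : ℕ} (v : Fin n → ℂ[X]) (o : Option ℕ) (b : Fin n) :
    ∑ q2, v q2 * oent o q2 b = v b * oent o b b := by
  cases o with
  | none => simp [oent]
  | some e => simp [oent, mul_ite, mul_zero, Finset.sum_ite_eq']

lemma sum_oent_row {n : ℕ} (w : Fin n → ℂ[X]) (o : Option ℕ) (a : Fin n) :
    ∑ p2, oent o a p2 * w p2 = oent o a a * w a := by
  cases o with
  | none => simp [oent]
  | some e => simp [oent, ite_mul, zero_mul, Finset.sum_ite_eq]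

lemma mul_SCol_apply {m n : ℕ} (M : Matrix (BI m n) (BI m n) ℂ[X]) (g : ℕ → Option ℕ)
    (p : BI m n) (b : Fin n) :
    (M * SCol m n g) p b = ∑ q1 : Fin m, M p (q1, b) * oent (g (q1 : ℕ)) b b := by
  rw [Matrix.mul_apply, Fintype.sum_prod_type]
  exact Finset.sum_congr rfl fun q1 _ => sum_oent (fun q2 => M p (q1, q2)) (g (q1 : ℕ)) b

lemma SRow_mul_apply {m n : ℕ} (M : Matrix (BI m n) (BI m n) ℂ[X]) (g : ℕ → Option ℕ)
    (a : Fin n) (q : BI m n) :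
    (SRow m n g * M) a q = ∑ p1 : Fin m, oent (g (p1 : ℕ)) a a * M (p1, a) q := by
  rw [Matrix.mul_apply, Fintype.sum_prod_type]
  exact Finset.sum_congr rfl fun p1 _ => sum_oent_row (fun p2 => M (p1, p2) q) (g (p1 : ℕ)) a

lemma sum_fin_cast {m : ℕ} (f : Fin m → ℂ[X]) (a : ℕ) (ha : a < m) :
    (∑ q1 : Fin m, if (q1 : ℕ) = a then f q1 else 0) = f ⟨a, ha⟩ := by
  rw [Finset.sum_eq_single (⟨a, ha⟩ : Fin m)]
  · simp
  · intro q1 _ hq1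
    rw [if_neg]
    intro h
    exact hq1 (Fin.ext h)
  · simp


/-! ### The four elementary multiplication lemmas -/

lemma QB_apply (m n : ℕ) (j : ℕ) (hj : 1 ≤ j) (g : ℕ → Option ℕ) (hgj : g j = none) :
    QBmat m n j * SCol m n g
      = SCol m n (fun t => if t = j then (g (j - 1)).map (· + 1) else g t) := by
  apply Matrix.ext
  rintro ⟨p1, p2⟩ b
  rw [mul_SCol_apply, SCol_apply]
  show _ = oent (if (p1 : ℕ) = j then (g (j - 1)).map (· + 1) else g (p1 : ℕ)) p2 b
  by_cases hp : (p1 : ℕ) = j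
  · have hjm : j - 1 < m := by have := p1.isLt; omega
    have hsum : ∀ q1 : Fin m, QBmat m n j (p1, p2) (q1, b) * oent (g (q1 : ℕ)) b b
        = if (q1 : ℕ) = j - 1 then (if p2 = b then (X : ℂ[X]) else 0) * oent (g (j - 1)) b b
          else 0 := by
      intro q1
      simp only [QBmat, Matrix.of_apply, Fin.ext_iff]
      split_ifs <;>
        first
          | rfl | omega
          | ((rw [show ((q1:ℕ)) = j from by omega, hgj]) <;> simp)
          | ((rw [show ((p1:ℕ)) = j from by omega, hgj]) <;> simp)
          | ((rw [show ((q1:ℕ)) = j - 1 from by omega]) <;> simp)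
          | ((rw [show ((p1:ℕ)) = j - 1 from by omega]) <;> simp)
          | ((rw [show ((q1:ℕ)) = ((p1:ℕ)) from by omega]) <;> simp)
          | ((rw [show ((p1:ℕ)) = ((q1:ℕ)) from by omega]) <;> simp)
          | simp
    rw [Finset.sum_congr rfl fun q1 _ => hsum q1, sum_fin_cast _ _ hjm, if_pos hp]
    cases hgo : g (j - 1) with
    | none => simp
    | some k =>
      by_cases hb : p2 = b <;> simp [hb, oent, pow_succ, mul_comm]
  · have hsum : ∀ q1 : Fin m, QBmat m n j (p1, p2) (q1, b) * oent (g (q1 : ℕ)) b b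
        = if (q1 : ℕ) = (p1 : ℕ) then
            (if p2 = b then (1 : ℂ[X]) else 0) * oent (g (p1 : ℕ)) b b else 0 := by
      intro q1
      simp only [QBmat, Matrix.of_apply, Fin.ext_iff]
      split_ifs <;>
        first
          | rfl | omega
          | ((rw [show ((q1:ℕ)) = j from by omega, hgj]) <;> simp)
          | ((rw [show ((p1:ℕ)) = j from by omega, hgj]) <;> simp)
          | ((rw [show ((q1:ℕ)) = j - 1 from by omega]) <;> simp)
          | ((rw [show ((p1:ℕ)) = j - 1 from by omega]) <;> simp)
          | ((rw [show ((q1:ℕ)) = ((p1:ℕ)) from by omega]) <;> simp)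
          | ((rw [show ((p1:ℕ)) = ((q1:ℕ)) from by omega]) <;> simp)
          | simp
    rw [Finset.sum_congr rfl fun q1 _ => hsum q1, sum_fin_cast _ _ p1.isLt, if_neg hp,
      oent_delta]

lemma R_apply (m n : ℕ) (Ac : ℕ → Matrix (Fin n) (Fin n) ℂ) (j : ℕ) (hj : 1 ≤ j)
    (g : ℕ → Option ℕ) (hgj : g j = none) :
    Rmat m n Ac j * SCol m n g
      = SCol m n (fun t => if t = j - 1 then none else if t = j then g (j - 1) else g t) := by
  apply Matrix.ext
  rintro ⟨p1, p2⟩ b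
  rw [mul_SCol_apply, SCol_apply]
  show _ = oent (if (p1 : ℕ) = j - 1 then none
      else if (p1 : ℕ) = j then g (j - 1) else g (p1 : ℕ)) p2 b
  by_cases hp1 : (p1 : ℕ) = j - 1
  · rw [if_pos hp1, oent_none]
    apply Finset.sum_eq_zero
    intro q1 _
    simp only [Rmat, Matrix.of_apply, Fin.ext_iff]
    split_ifs <;>
      first
        | rfl | omega
        | ((rw [show ((q1:ℕ)) = j from by omega, hgj]) <;> simp)
        | ((rw [show ((p1:ℕ)) = j from by omega, hgj]) <;> simp)
        | ((rw [show ((q1:ℕ)) = j - 1 from by omega]) <;> simp)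
        | ((rw [show ((p1:ℕ)) = j - 1 from by omega]) <;> simp)
        | ((rw [show ((q1:ℕ)) = ((p1:ℕ)) from by omega]) <;> simp)
        | ((rw [show ((p1:ℕ)) = ((q1:ℕ)) from by omega]) <;> simp)
        | simp
  · by_cases hp2 : (p1 : ℕ) = j
    · have hjm : j - 1 < m := by have := p1.isLt; omega
      have hsum : ∀ q1 : Fin m, Rmat m n Ac j (p1, p2) (q1, b) * oent (g (q1 : ℕ)) b b
          = if (q1 : ℕ) = j - 1 then
              (if p2 = b then (1 : ℂ[X]) else 0) * oent (g (j - 1)) b b else 0 := by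
        intro q1
        simp only [Rmat, Matrix.of_apply, Fin.ext_iff]
        split_ifs <;>
        first
          | rfl | omega
          | ((rw [show ((q1:ℕ)) = j from by omega, hgj]) <;> simp)
          | ((rw [show ((p1:ℕ)) = j from by omega, hgj]) <;> simp)
          | ((rw [show ((q1:ℕ)) = j - 1 from by omega]) <;> simp)
          | ((rw [show ((p1:ℕ)) = j - 1 from by omega]) <;> simp)
          | ((rw [show ((q1:ℕ)) = ((p1:ℕ)) from by omega]) <;> simp)
          | ((rw [show ((p1:ℕ)) = ((q1:ℕ)) from by omega]) <;> simp)
          | simp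
      rw [Finset.sum_congr rfl fun q1 _ => hsum q1, sum_fin_cast _ _ hjm, if_neg hp1,
        if_pos hp2, oent_delta]
    · have hsum : ∀ q1 : Fin m, Rmat m n Ac j (p1, p2) (q1, b) * oent (g (q1 : ℕ)) b b
          = if (q1 : ℕ) = (p1 : ℕ) then
              (if p2 = b then (1 : ℂ[X]) else 0) * oent (g (p1 : ℕ)) b b else 0 := by
        intro q1
        simp only [Rmat, Matrix.of_apply, Fin.ext_iff]
        split_ifs <;>
        first
          | rfl | omega
          | ((rw [show ((q1:ℕ)) = j from by omega, hgj]) <;> simp)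
          | ((rw [show ((p1:ℕ)) = j from by omega, hgj]) <;> simp)
          | ((rw [show ((q1:ℕ)) = j - 1 from by omega]) <;> simp)
          | ((rw [show ((p1:ℕ)) = j - 1 from by omega]) <;> simp)
          | ((rw [show ((q1:ℕ)) = ((p1:ℕ)) from by omega]) <;> simp)
          | ((rw [show ((p1:ℕ)) = ((q1:ℕ)) from by omega]) <;> simp)
          | simp
      rw [Finset.sum_congr rfl fun q1 _ => hsum q1, sum_fin_cast _ _ p1.isLt, if_neg hp1,
        if_neg hp2, oent_delta]

lemma Q_rapply (m n : ℕ) (j : ℕ) (hj : 1 ≤ j) (g : ℕ → Option ℕ) (hgj : g j = none) :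
    SRow m n g * Qmat m n j
      = SRow m n (fun t => if t = j then (g (j - 1)).map (· + 1) else g t) := by
  apply Matrix.ext
  rintro a ⟨q1, q2⟩
  rw [SRow_mul_apply, SRow_apply]
  show _ = oent (if (q1 : ℕ) = j then (g (j - 1)).map (· + 1) else g (q1 : ℕ)) a q2
  by_cases hq : (q1 : ℕ) = j
  · have hjm : j - 1 < m := by have := q1.isLt; omega
    have hsum : ∀ p1 : Fin m, oent (g (p1 : ℕ)) a a * Qmat m n j (p1, a) (q1, q2)
        = if (p1 : ℕ) = j - 1 then oent (g (j - 1)) a a * (if a = q2 then (X : ℂ[X]) else 0)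
          else 0 := by
      intro p1
      simp only [Qmat, Matrix.of_apply, Fin.ext_iff]
      split_ifs <;>
        first
          | rfl | omega
          | ((rw [show ((q1:ℕ)) = j from by omega, hgj]) <;> simp)
          | ((rw [show ((p1:ℕ)) = j from by omega, hgj]) <;> simp)
          | ((rw [show ((q1:ℕ)) = j - 1 from by omega]) <;> simp)
          | ((rw [show ((p1:ℕ)) = j - 1 from by omega]) <;> simp)
          | ((rw [show ((q1:ℕ)) = ((p1:ℕ)) from by omega]) <;> simp)
          | ((rw [show ((p1:ℕ)) = ((q1:ℕ)) from by omega]) <;> simp)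
          | simp
    rw [Finset.sum_congr rfl fun p1 _ => hsum p1, sum_fin_cast _ _ hjm, if_pos hq]
    cases hgo : g (j - 1) with
    | none => simp
    | some k =>
      by_cases hb : a = q2 <;> simp [hb, oent, pow_succ]
  · have hsum : ∀ p1 : Fin m, oent (g (p1 : ℕ)) a a * Qmat m n j (p1, a) (q1, q2)
        = if (p1 : ℕ) = (q1 : ℕ) then
            oent (g (q1 : ℕ)) a a * (if a = q2 then (1 : ℂ[X]) else 0) else 0 := by
      intro p1
      simp only [Qmat, Matrix.of_apply, Fin.ext_iff]
      split_ifs <;>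
        first
          | rfl | omega
          | ((rw [show ((q1:ℕ)) = j from by omega, hgj]) <;> simp)
          | ((rw [show ((p1:ℕ)) = j from by omega, hgj]) <;> simp)
          | ((rw [show ((q1:ℕ)) = j - 1 from by omega]) <;> simp)
          | ((rw [show ((p1:ℕ)) = j - 1 from by omega]) <;> simp)
          | ((rw [show ((q1:ℕ)) = ((p1:ℕ)) from by omega]) <;> simp)
          | ((rw [show ((p1:ℕ)) = ((q1:ℕ)) from by omega]) <;> simp)
          | simp
    rw [Finset.sum_congr rfl fun p1 _ => hsum p1, sum_fin_cast _ _ q1.isLt, if_neg hq,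
      oent_delta']

lemma R_rapply (m n : ℕ) (Ac : ℕ → Matrix (Fin n) (Fin n) ℂ) (j : ℕ) (hj : 1 ≤ j)
    (g : ℕ → Option ℕ) (hgj : g j = none) :
    SRow m n g * Rmat m n Ac j
      = SRow m n (fun t => if t = j - 1 then none else if t = j then g (j - 1) else g t) := by
  apply Matrix.ext
  rintro a ⟨q1, q2⟩
  rw [SRow_mul_apply, SRow_apply]
  show _ = oent (if (q1 : ℕ) = j - 1 then none
      else if (q1 : ℕ) = j then g (j - 1) else g (q1 : ℕ)) a q2
  by_cases hq1 : (q1 : ℕ) = j - 1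
  · rw [if_pos hq1, oent_none]
    apply Finset.sum_eq_zero
    intro p1 _
    simp only [Rmat, Matrix.of_apply, Fin.ext_iff]
    split_ifs <;>
      first
        | rfl | omega
        | ((rw [show ((q1:ℕ)) = j from by omega, hgj]) <;> simp)
        | ((rw [show ((p1:ℕ)) = j from by omega, hgj]) <;> simp)
        | ((rw [show ((q1:ℕ)) = j - 1 from by omega]) <;> simp)
        | ((rw [show ((p1:ℕ)) = j - 1 from by omega]) <;> simp)
        | ((rw [show ((q1:ℕ)) = ((p1:ℕ)) from by omega]) <;> simp)
        | ((rw [show ((p1:ℕ)) = ((q1:ℕ)) from by omega]) <;> simp)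
        | simp
  · by_cases hq2 : (q1 : ℕ) = j
    · have hjm : j - 1 < m := by have := q1.isLt; omega
      have hsum : ∀ p1 : Fin m, oent (g (p1 : ℕ)) a a * Rmat m n Ac j (p1, a) (q1, q2)
          = if (p1 : ℕ) = j - 1 then
              oent (g (j - 1)) a a * (if a = q2 then (1 : ℂ[X]) else 0) else 0 := by
        intro p1
        simp only [Rmat, Matrix.of_apply, Fin.ext_iff]
        split_ifs <;>
        first
          | rfl | omega
          | ((rw [show ((q1:ℕ)) = j from by omega, hgj]) <;> simp)
          | ((rw [show ((p1:ℕ)) = j from by omega, hgj]) <;> simp)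
          | ((rw [show ((q1:ℕ)) = j - 1 from by omega]) <;> simp)
          | ((rw [show ((p1:ℕ)) = j - 1 from by omega]) <;> simp)
          | ((rw [show ((q1:ℕ)) = ((p1:ℕ)) from by omega]) <;> simp)
          | ((rw [show ((p1:ℕ)) = ((q1:ℕ)) from by omega]) <;> simp)
          | simp
      rw [Finset.sum_congr rfl fun p1 _ => hsum p1, sum_fin_cast _ _ hjm, if_neg hq1,
        if_pos hq2, oent_delta']
    · have hsum : ∀ p1 : Fin m, oent (g (p1 : ℕ)) a a * Rmat m n Ac j (p1, a) (q1, q2)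
          = if (p1 : ℕ) = (q1 : ℕ) then
              oent (g (q1 : ℕ)) a a * (if a = q2 then (1 : ℂ[X]) else 0) else 0 := by
        intro p1
        simp only [Rmat, Matrix.of_apply, Fin.ext_iff]
        split_ifs <;>
        first
          | rfl | omega
          | ((rw [show ((q1:ℕ)) = j from by omega, hgj]) <;> simp)
          | ((rw [show ((p1:ℕ)) = j from by omega, hgj]) <;> simp)
          | ((rw [show ((q1:ℕ)) = j - 1 from by omega]) <;> simp)
          | ((rw [show ((p1:ℕ)) = j - 1 from by omega]) <;> simp)
          | ((rw [show ((q1:ℕ)) = ((p1:ℕ)) from by omega]) <;> simp)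
          | ((rw [show ((p1:ℕ)) = ((q1:ℕ)) from by omega]) <;> simp)
          | simp
      rw [Finset.sum_congr rfl fun p1 _ => hsum p1, sum_fin_cast _ _ q1.isLt, if_neg hq1,
        if_neg hq2, oent_delta']


/-! ### Chains of factors -/

lemma Qchain (m n : ℕ) (s c e : ℕ) (g : ℕ → Option ℕ)
    (hh : ∀ t, s ≤ t → g t = if t = s then some e else none) :
    (((List.range c).map fun t => QBmat m n (s + c - t)).prod) * SCol m n g
      = SCol m n (fun t => if t < s then g t
          else if t ≤ s + c then some (e + (t - s)) else none) := by
  induction c with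
  | zero =>
    simp only [List.range_zero, List.map_nil, List.prod_nil, Matrix.one_mul]
    apply SCol_congr
    intro t
    by_cases h1 : t < s
    · rw [if_pos h1]
    · rw [if_neg h1, hh t (by omega)]
      split_ifs <;> first | rfl | omega | (refine congrArg some ?_; omega)
  | succ c IH =>
    have hlist : ((List.range (c + 1)).map fun t => QBmat m n (s + (c + 1) - t)).prod
        = QBmat m n (s + c + 1) * ((List.range c).map fun t => QBmat m n (s + c - t)).prod := by
      rw [List.range_succ_eq_map, List.map_cons, List.prod_cons, List.map_map,
        show s + (c + 1) - 0 = s + c + 1 from by omega,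
        show ((fun t => QBmat m n (s + (c + 1) - t)) ∘ Nat.succ)
          = (fun t => QBmat m n (s + c - t)) from
          funext fun t => by
            simp only [Function.comp_apply,
              show s + (c + 1) - (t + 1) = s + c - t from by omega]]
    have happ := QB_apply m n (s + c + 1) (by omega)
      (fun t => if t < s then g t else if t ≤ s + c then some (e + (t - s)) else none)
      (by (try simp only []); rw [if_neg (by omega), if_neg (by omega)])
    rw [hlist, Matrix.mul_assoc, IH, happ]
    apply SCol_congr
    intro t
    simp only [show s + c + 1 - 1 = s + c from by omega]
    split_ifs <;>
      first
        | rfl | omega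
        | (refine congrArg some ?_; omega)
        | (rw [Option.map_some]; (refine congrArg some ?_; omega))

lemma Rchain (m n : ℕ) (Ac : ℕ → Matrix (Fin n) (Fin n) ℂ) (s i e : ℕ) (g : ℕ → Option ℕ)
    (h1 : g s = some e) (h2 : ∀ t, s < t → g t = none) :
    (((List.range i).map fun t => Rmat m n Ac (s + i - t)).prod) * SCol m n g
      = SCol m n (fun t => if t = s + i then some e else if s ≤ t then none else g t) := by
  induction i with
  | zero =>
    simp only [List.range_zero, List.map_nil, List.prod_nil, Matrix.one_mul]
    apply SCol_congr
    intro t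
    by_cases ht : t = s + 0
    · rw [if_pos ht, show t = s from by omega, h1]
    · rw [if_neg ht]
      by_cases hs : s ≤ t
      · rw [if_pos hs, h2 t (by omega)]
      · rw [if_neg hs]
  | succ i IH =>
    have hlist : ((List.range (i + 1)).map fun t => Rmat m n Ac (s + (i + 1) - t)).prod
        = Rmat m n Ac (s + i + 1)
          * ((List.range i).map fun t => Rmat m n Ac (s + i - t)).prod := by
      rw [List.range_succ_eq_map, List.map_cons, List.prod_cons, List.map_map,
        show s + (i + 1) - 0 = s + i + 1 from by omega,
        show ((fun t => Rmat m n Ac (s + (i + 1) - t)) ∘ Nat.succ)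
          = (fun t => Rmat m n Ac (s + i - t)) from
          funext fun t => by
            simp only [Function.comp_apply,
              show s + (i + 1) - (t + 1) = s + i - t from by omega]]
    have happ := R_apply m n Ac (s + i + 1) (by omega)
      (fun t => if t = s + i then some e else if s ≤ t then none else g t)
      (by (try simp only []); rw [if_neg (by omega), if_pos (by omega)])
    rw [hlist, Matrix.mul_assoc, IH, happ]
    apply SCol_congr
    intro t
    simp only [show s + i + 1 - 1 = s + i from by omega]
    split_ifs <;> first | rfl | omega

lemma Ufac_apply (m n : ℕ) (Ac : ℕ → Matrix (Fin n) (Fin n) ℂ) (s c i e : ℕ)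
    (g : ℕ → Option ℕ) (hh : ∀ t, s ≤ t → g t = if t = s then some e else none) :
    Ufac m n Ac s c i * SCol m n g
      = SCol m n (fun t => if t < s then g t else if t < s + c then some (e + (t - s))
          else if t = s + c + i then some (e + c) else none) := by
  unfold Ufac
  have hrc := Rchain m n Ac (s + c) i (e + c)
    (fun t => if t < s then g t else if t ≤ s + c then some (e + (t - s)) else none)
    (by try simp only []
        rw [if_neg (by omega), if_pos (by omega)]
        (refine congrArg some ?_; omega))
    (by intro t ht
        try simp only []
        rw [if_neg (by omega), if_neg (by omega)])
  rw [Matrix.mul_assoc, Qchain m n s c e g hh, hrc]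
  apply SCol_congr
  intro t
  try simp only []
  split_ifs <;> first | rfl | omega | (refine congrArg some ?_; omega)

lemma U_main (m n : ℕ) (Ac : ℕ → Matrix (Fin n) (Fin n) ℂ) (L : List (ℕ × ℕ)) (hL : L ≠ []) :
    ∀ (s e : ℕ) (g : ℕ → Option ℕ),
      (∀ t, s ≤ t → g t = if t = s then some e else none) →
      Uprod m n Ac L s * SCol m n g
        = SCol m n (fun t => if t < s then g t else lamExp L e (t - s)) := by
  induction L with
  | nil => exact absurd rfl hL
  | cons ci rest IH =>
    obtain ⟨c, i⟩ := ci
    intro s e g hh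
    rw [show Uprod m n Ac ((c, i) :: rest) s
        = Uprod m n Ac rest (s + c + i) * Ufac m n Ac s c i from rfl,
      Matrix.mul_assoc, Ufac_apply m n Ac s c i e g hh]
    cases rest with
    | nil =>
      rw [show Uprod m n Ac [] (s + c + i) = 1 from rfl, Matrix.one_mul]
      apply SCol_congr
      intro t
      try simp only []
      by_cases h1 : t < s
      · rw [if_pos h1, if_pos h1]
      · rw [if_neg h1, if_neg h1,
          show lamExp [(c, i)] e (t - s) = if t - s < c then some (e + (t - s))
            else if t - s = c + i then some (e + c) else none from rfl]
        split_ifs <;> first | rfl | omega | (refine congrArg some ?_; omega)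
    | cons ci2 rest2 =>
      obtain ⟨c2, i2⟩ := ci2
      have hih := IH (by simp) (s + c + i) (e + c)
        (fun t => if t < s then g t else if t < s + c then some (e + (t - s))
          else if t = s + c + i then some (e + c) else none)
        (by intro t ht
            try simp only []
            split_ifs <;> first | rfl | omega)
      rw [hih]
      apply SCol_congr
      intro t
      try simp only []
      by_cases h1 : t < s
      · rw [if_pos (show t < s + c + i from by omega), if_pos h1, if_pos h1]
      · rw [if_neg h1,
          show lamExp ((c, i) :: (c2, i2) :: rest2) e (t - s)
            = if t - s < c then some (e + (t - s)) else if t - s < c + i then none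
              else lamExp ((c2, i2) :: rest2) (e + c) (t - s - (c + i)) from rfl]
        by_cases h2 : t < s + c + i
        · rw [if_pos h2, if_neg h1]
          split_ifs <;> first | rfl | omega | (refine congrArg some ?_; omega)
        · rw [if_neg h2]
          split_ifs <;>
            first
              | omega
              | (refine congrArg (lamExp ((c2, i2) :: rest2) (e + c)) ?_; omega)

/-! ### Row chains -/

lemma VRchain (m n : ℕ) (Ac : ℕ → Matrix (Fin n) (Fin n) ℂ) :
    ∀ (c s e : ℕ) (g : ℕ → Option ℕ),
      (∀ t, s ≤ t → g t = if t = s then some e else none) →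
      SRow m n g * (((List.range c).map fun t => Rmat m n Ac (s + 1 + t)).prod)
        = SRow m n (fun t => if t < s then g t else if t = s + c then some e else none) := by
  intro c
  induction c with
  | zero =>
    intro s e g hh
    simp only [List.range_zero, List.map_nil, List.prod_nil, Matrix.mul_one]
    apply SRow_congr
    intro t
    by_cases h1 : t < s
    · rw [if_pos h1]
    · rw [if_neg h1, hh t (by omega)]
      split_ifs <;> first | rfl | omega
  | succ c IH =>
    intro s e g hh
    have hgs : g s = some e := by rw [hh s (le_refl s), if_pos rfl]
    have hlist : ((List.range (c + 1)).map fun t => Rmat m n Ac (s + 1 + t)).prod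
        = Rmat m n Ac (s + 1)
          * ((List.range c).map fun t => Rmat m n Ac (s + 1 + 1 + t)).prod := by
      rw [List.range_succ_eq_map, List.map_cons, List.prod_cons, List.map_map,
        show s + 1 + 0 = s + 1 from by omega,
        show ((fun t => Rmat m n Ac (s + 1 + t)) ∘ Nat.succ)
          = (fun t => Rmat m n Ac (s + 1 + 1 + t)) from
          funext fun t => by
            simp only [Function.comp_apply,
              show s + 1 + (t + 1) = s + 1 + 1 + t from by omega]]
    have hih := IH (s + 1) e
      (fun t => if t = s + 1 - 1 then none else if t = s + 1 then g (s + 1 - 1) else g t)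
      (by intro t ht
          simp only [show s + 1 - 1 = s from by omega]
          split_ifs <;>
            first
              | rfl | omega | exact hgs
              | (rw [hh t (by omega), if_neg (by omega)]))
    rw [hlist, ← Matrix.mul_assoc,
      R_rapply m n Ac (s + 1) (by omega) g
        (by rw [hh (s + 1) (by omega), if_neg (by omega)]),
      hih]
    apply SRow_congr
    intro t
    simp only [show s + 1 - 1 = s from by omega]
    split_ifs <;> first | rfl | omega | exact hgs | exact hgs.symm

lemma VQchain (m n : ℕ) :
    ∀ (i s e : ℕ) (g : ℕ → Option ℕ),
      g s = some e → (∀ t, s < t → g t = none) →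
      SRow m n g * (((List.range i).map fun t => Qmat m n (s + 1 + t)).prod)
        = SRow m n (fun t => if t < s then g t
            else if t ≤ s + i then some (e + (t - s)) else none) := by
  intro i
  induction i with
  | zero =>
    intro s e g h1 h2
    simp only [List.range_zero, List.map_nil, List.prod_nil, Matrix.mul_one]
    apply SRow_congr
    intro t
    by_cases ha : t < s
    · rw [if_pos ha]
    · by_cases hb : t = s
      · rw [if_neg ha, if_pos (by omega), hb, h1]
        (refine congrArg some ?_; omega)
      · rw [if_neg ha, if_neg (by omega), h2 t (by omega)]
  | succ i IH =>
    intro s e g h1 h2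
    have hlist : ((List.range (i + 1)).map fun t => Qmat m n (s + 1 + t)).prod
        = Qmat m n (s + 1) * ((List.range i).map fun t => Qmat m n (s + 1 + 1 + t)).prod := by
      rw [List.range_succ_eq_map, List.map_cons, List.prod_cons, List.map_map,
        show s + 1 + 0 = s + 1 from by omega,
        show ((fun t => Qmat m n (s + 1 + t)) ∘ Nat.succ)
          = (fun t => Qmat m n (s + 1 + 1 + t)) from
          funext fun t => by
            simp only [Function.comp_apply,
              show s + 1 + (t + 1) = s + 1 + 1 + t from by omega]]
    have hih := IH (s + 1) (e + 1)
      (fun t => if t = s + 1 then (g (s + 1 - 1)).map (· + 1) else g t)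
      (by simp only [show s + 1 - 1 = s from by omega, if_pos rfl, h1]
          rfl)
      (by intro t ht
          try simp only []
          rw [if_neg (by omega), h2 t (by omega)])
    rw [hlist, ← Matrix.mul_assoc,
      Q_rapply m n (s + 1) (by omega) g (h2 (s + 1) (by omega)),
      hih]
    apply SRow_congr
    intro t
    simp only [show s + 1 - 1 = s from by omega]
    split_ifs <;>
      first
        | rfl | omega
        | (refine congrArg some ?_; omega)
        | (rw [h1, Option.map_some]; (refine congrArg some ?_; omega))
        | (rw [h1]; (refine congrArg some ?_; omega))
        | (rw [h2 t (by omega)])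
        | (rw [show t = s from by omega, h1]; refine congrArg some ?_; omega)

lemma Vfac_apply (m n : ℕ) (Ac : ℕ → Matrix (Fin n) (Fin n) ℂ) (s c i e : ℕ)
    (g : ℕ → Option ℕ) (hh : ∀ t, s ≤ t → g t = if t = s then some e else none) :
    SRow m n g * Vfac m n Ac s c i
      = SRow m n (fun t => if t < s then g t else if t < s + c then none
          else if t ≤ s + c + i then some (e + (t - (s + c))) else none) := by
  unfold Vfac
  have hvq := VQchain m n i (s + c) e
    (fun t => if t < s then g t else if t = s + c then some e else none)
    (by simp [show ¬ (s + c < s) from by omega])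
    (by intro t ht
        try simp only []
        rw [if_neg (by omega), if_neg (by omega)])
  rw [← Matrix.mul_assoc, VRchain m n Ac c s e g hh, hvq]
  apply SRow_congr
  intro t
  try simp only []
  split_ifs <;> first | rfl | omega | (refine congrArg some ?_; omega)

lemma V_main (m n : ℕ) (Ac : ℕ → Matrix (Fin n) (Fin n) ℂ) (L : List (ℕ × ℕ)) (hL : L ≠ []) :
    ∀ (s e : ℕ) (g : ℕ → Option ℕ),
      (∀ t, s ≤ t → g t = if t = s then some e else none) →
      SRow m n g * Vprod m n Ac L s
        = SRow m n (fun t => if t < s then g t else omExp L e (t - s)) := by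
  induction L with
  | nil => exact absurd rfl hL
  | cons ci rest IH =>
    obtain ⟨c, i⟩ := ci
    intro s e g hh
    rw [show Vprod m n Ac ((c, i) :: rest) s
        = Vfac m n Ac s c i * Vprod m n Ac rest (s + c + i) from rfl,
      ← Matrix.mul_assoc, Vfac_apply m n Ac s c i e g hh]
    cases rest with
    | nil =>
      rw [show Vprod m n Ac [] (s + c + i) = 1 from rfl, Matrix.mul_one]
      apply SRow_congr
      intro t
      try simp only []
      by_cases h1 : t < s
      · rw [if_pos h1, if_pos h1]
      · rw [if_neg h1, if_neg h1,
          show omExp [(c, i)] e (t - s) = if t - s < c then none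
            else if t - s < c + i then some (e + (t - s - c))
            else if t - s = c + i then some (e + i) else none from rfl]
        split_ifs <;> first | rfl | omega | (refine congrArg some ?_; omega)
    | cons ci2 rest2 =>
      obtain ⟨c2, i2⟩ := ci2
      have hih := IH (by simp) (s + c + i) (e + i)
        (fun t => if t < s then g t else if t < s + c then none
          else if t ≤ s + c + i then some (e + (t - (s + c))) else none)
        (by intro t ht
            try simp only []
            split_ifs <;> first | rfl | omega | (refine congrArg some ?_; omega))
      rw [hih]
      apply SRow_congr
      intro t
      try simp only []
      by_cases h1 : t < s
      · rw [if_pos (show t < s + c + i from by omega), if_pos h1, if_pos h1]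
      · rw [if_neg h1,
          show omExp ((c, i) :: (c2, i2) :: rest2) e (t - s)
            = if t - s < c then none else if t - s < c + i then some (e + (t - s - c))
              else omExp ((c2, i2) :: rest2) (e + i) (t - s - (c + i)) from rfl]
        by_cases h2 : t < s + c + i
        · rw [if_pos h2, if_neg h1]
          split_ifs <;> first | rfl | omega | (refine congrArg some ?_; omega)
        · rw [if_neg h2]
          split_ifs <;>
            first
              | omega
              | (refine congrArg (omExp ((c2, i2) :: rest2) (e + i)) ?_; omega)


/-! ### STATEMENT 1: the first block column of `U(λ)` is `Λ_α(λ)` and the first block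
row of `V(λ)` is `Ω_α(λ)`. -/

theorem first_col_U_and_first_row_V
    (m n : ℕ) (hm : 2 ≤ m) (hn : 0 < n)
    (Ac : ℕ → Matrix (Fin n) (Fin n) ℂ) (hAm : Ac m ≠ 0)
    (α : List ℤ) (hα : PermOn α 0 m)
    (L : List (ℕ × ℕ)) (hL : L ≠ []) (hRCISS : IsRCISS m α L) :
    Uprod m n Ac L 0 * e1ColI m n = LamMat m n L ∧
    e1RowI m n * Vprod m n Ac L 0 = OmMat m n L := by
  constructor
  · have h1 : e1ColI m n = SCol m n (fun t => if t = 0 then some 0 else none) := by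
      apply Matrix.ext
      rintro ⟨p1, p2⟩ b
      simp only [e1ColI, SCol_apply, Matrix.of_apply]
      by_cases h : (p1 : ℕ) = 0 <;> by_cases hb : p2 = b <;> simp [h, hb, oent]
    have h2 : LamMat m n L = SCol m n (fun t => lamExp L 0 t) := by
      apply Matrix.ext
      rintro ⟨p1, p2⟩ b
      simp only [LamMat, SCol_apply, Matrix.of_apply]
      cases hx : lamExp L 0 ((p1 : ℕ)) <;> simp [hx, oent]
    rw [h1, U_main m n Ac L hL 0 0 (fun t => if t = 0 then some 0 else none)
      (fun t _ => rfl), h2]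
    apply SCol_congr
    intro t
    rw [if_neg (by omega), Nat.sub_zero]
  · have h1 : e1RowI m n = SRow m n (fun t => if t = 0 then some 0 else none) := by
      apply Matrix.ext
      rintro a ⟨q1, q2⟩
      simp only [e1RowI, SRow_apply, Matrix.of_apply]
      by_cases h : (q1 : ℕ) = 0 <;> by_cases hb : a = q2 <;> simp [h, hb, oent]
    have h2 : OmMat m n L = SRow m n (fun t => omExp L 0 t) := by
      apply Matrix.ext
      rintro a ⟨q1, q2⟩
      simp only [OmMat, SRow_apply, Matrix.of_apply]
      cases hx : omExp L 0 ((q1 : ℕ)) <;> simp [hx, oent]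
    rw [h1, V_main m n Ac L hL 0 0 (fun t => if t = 0 then some 0 else none)
      (fun t _ => rfl), h2]
    apply SRow_congr
    intro t
    rw [if_neg (by omega), Nat.sub_zero]

end RatLin
end
end

section
/- Let X(λ) := [x_1 x_2 ⋯ x_m]^B be an mn×n block-column matrix and Y(λ) := [y_1 y_2 ⋯ y_m] an n×mn block-row matrix, where each block x_i is either 0 or λ^{p_i} I_n and each y_i is either 0 or λ^{q_i} I_n for some integers p_i ≥ 0, q_i ≥ 0 (i = 1,…,m). Suppose x_i y_i = 0 for i = 1,…,m−1. Then there exist an m×m-block lower block-triangular matrix polynomial L(λ) with all diagonal blocks I_n and an m×m-block upper block-triangular matrix polynomial U(λ) with all diagonal blocks I_n such that L(λ) (diag(I_{(m−1)n}, 0_n) + X(λ)Y(λ)) U(λ) = diag(I_{(m−1)n}, x_m y_m). -/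
open Polynomial Matrix
open scoped Classical

set_option synthInstance.maxHeartbeats 1000000
set_option maxHeartbeats 1000000

noncomputable section

namespace RatLin

/-! ### Auxiliary machinery for block elimination -/

namespace BlockElim

/-- `A ⊗ I_n` as a block matrix. -/
def kron (m n : ℕ) (A : Matrix (Fin m) (Fin m) ℂ[X]) : Matrix (BI m n) (BI m n) ℂ[X] :=
  Matrix.of fun p q => if p.2 = q.2 then A p.1 q.1 else 0

lemma kron_mul (m n : ℕ) (A B : Matrix (Fin m) (Fin m) ℂ[X]) :
    kron m n A * kron m n B = kron m n (A * B) := by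
  refine Matrix.ext fun p q => ?_
  obtain ⟨i, a⟩ := p
  obtain ⟨j, b⟩ := q
  simp only [kron, Matrix.mul_apply, Matrix.of_apply, Fintype.sum_prod_type, ite_mul, zero_mul,
    mul_ite, mul_zero]
  rw [Finset.sum_comm]
  simp [Finset.sum_ite_eq]

/-- The strictly lower part. -/
def Sm (m : ℕ) (c d : Fin m → ℂ[X]) : Matrix (Fin m) (Fin m) ℂ[X] :=
  Matrix.of fun i j => if j < i then c i * d j else 0

/-- The strictly upper part. -/
def Tm (m : ℕ) (c d : Fin m → ℂ[X]) : Matrix (Fin m) (Fin m) ℂ[X] :=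
  Matrix.of fun i j => if i < j then c i * d j else 0

/-- `diag(1,…,1,0)`. -/
def Dm (m : ℕ) : Matrix (Fin m) (Fin m) ℂ[X] :=
  Matrix.of fun i j => if i = j ∧ (i : ℕ) ≠ m - 1 then 1 else 0

/-- `diag(0,…,0,c_{m-1} d_{m-1})`. -/
def Dl (m : ℕ) (c d : Fin m → ℂ[X]) : Matrix (Fin m) (Fin m) ℂ[X] :=
  Matrix.of fun i j => if i = j ∧ (i : ℕ) = m - 1 then c i * d j else 0

section Products

variable (m : ℕ) (c d : Fin m → ℂ[X])

lemma SD : Sm m c d * Dm m = Sm m c d := by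
  refine Matrix.ext fun i j => ?_
  rw [Matrix.mul_apply, Finset.sum_eq_single j]
  · simp only [Sm, Dm, Matrix.of_apply]
    by_cases hj : (j : ℕ) = m - 1
    · have h1 : ¬ j < i := by
        have := i.isLt
        simp only [Fin.lt_def]
        omega
      simp [hj, h1]
    · simp [hj]
  · intro k _ hk
    simp [Dm, hk]
  · intro h
    exact absurd (Finset.mem_univ j) h

lemma DT : Dm m * Tm m c d = Tm m c d := by
  refine Matrix.ext fun i j => ?_
  rw [Matrix.mul_apply, Finset.sum_eq_single i]
  · simp only [Sm, Dm, Tm, Matrix.of_apply]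
    by_cases hi : (i : ℕ) = m - 1
    · have h1 : ¬ i < j := by
        have := j.isLt
        simp only [Fin.lt_def]
        omega
      simp [hi, h1]
    · simp [hi]
  · intro k _ hk
    simp [Dm, hk.symm]
  · intro h
    exact absurd (Finset.mem_univ i) h

lemma SDl : Sm m c d * Dl m c d = 0 := by
  refine Matrix.ext fun i j => ?_
  rw [Matrix.mul_apply, Matrix.zero_apply]
  refine Finset.sum_eq_zero fun k _ => ?_
  simp only [Sm, Dl, Matrix.of_apply]
  by_cases hk : (k : ℕ) = m - 1
  · have h1 : ¬ k < i := by
      have := i.isLt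
      simp only [Fin.lt_def]
      omega
    simp [h1]
  · simp [hk]

lemma DlT : Dl m c d * Tm m c d = 0 := by
  refine Matrix.ext fun i j => ?_
  rw [Matrix.mul_apply, Matrix.zero_apply]
  refine Finset.sum_eq_zero fun k _ => ?_
  simp only [Sm, Dl, Tm, Matrix.of_apply]
  by_cases h1 : i = k ∧ (i : ℕ) = m - 1
  · obtain ⟨rfl, h1b⟩ := h1
    have h2 : ¬ i < j := by
      have := j.isLt
      simp only [Fin.lt_def]
      omega
    simp [h1b, h2]
  · simp [h1]

variable (hcd : ∀ i : Fin m, (i : ℕ) < m - 1 → c i * d i = 0)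
include hcd

lemma SS : Sm m c d * Sm m c d = 0 := by
  refine Matrix.ext fun i j => ?_
  rw [Matrix.mul_apply, Matrix.zero_apply]
  refine Finset.sum_eq_zero fun k _ => ?_
  simp only [Sm, Matrix.of_apply]
  by_cases h1 : k < i
  · by_cases h2 : j < k
    · have hk : c k * d k = 0 := by
        refine hcd k ?_
        have := i.isLt
        rw [Fin.lt_def] at h1
        omega
      rw [if_pos h1, if_pos h2]
      calc c i * d k * (c k * d j) = c k * d k * (c i * d j) := by ring
        _ = 0 := by rw [hk, zero_mul]
    · simp [h2]
  · simp [h1]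

lemma ST : Sm m c d * Tm m c d = 0 := by
  refine Matrix.ext fun i j => ?_
  rw [Matrix.mul_apply, Matrix.zero_apply]
  refine Finset.sum_eq_zero fun k _ => ?_
  simp only [Sm, Tm, Matrix.of_apply]
  by_cases h1 : k < i
  · by_cases h2 : k < j
    · have hk : c k * d k = 0 := by
        refine hcd k ?_
        have := i.isLt
        rw [Fin.lt_def] at h1
        omega
      rw [if_pos h1, if_pos h2]
      calc c i * d k * (c k * d j) = c k * d k * (c i * d j) := by ring
        _ = 0 := by rw [hk, zero_mul]
    · simp [h2]
  · simp [h1]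

lemma TT : Tm m c d * Tm m c d = 0 := by
  refine Matrix.ext fun i j => ?_
  rw [Matrix.mul_apply, Matrix.zero_apply]
  refine Finset.sum_eq_zero fun k _ => ?_
  simp only [Tm, Matrix.of_apply]
  by_cases h2 : k < j
  · by_cases h1 : i < k
    · have hk : c k * d k = 0 := by
        refine hcd k ?_
        have := j.isLt
        rw [Fin.lt_def] at h2
        omega
      rw [if_pos h1, if_pos h2]
      calc c i * d k * (c k * d j) = c k * d k * (c i * d j) := by ring
        _ = 0 := by rw [hk, zero_mul]
    · simp [h1]
  · simp [h2]

lemma key :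
    (1 - Sm m c d) * (Dm m + Dl m c d + Sm m c d + Tm m c d) * (1 - Tm m c d) =
      Dm m + Dl m c d := by
  have hSM : Sm m c d * (Dm m + Dl m c d + Sm m c d + Tm m c d) = Sm m c d := by
    rw [mul_add, mul_add, mul_add, SD, SDl, SS m c d hcd, ST m c d hcd]
    simp
  have hMT : (Dm m + Dl m c d + Sm m c d + Tm m c d) * Tm m c d = Tm m c d := by
    rw [add_mul, add_mul, add_mul, DT, DlT, ST m c d hcd, TT m c d hcd]
    simp
  rw [sub_mul, one_mul, hSM, sub_mul, mul_sub, mul_one, hMT, mul_sub, mul_one,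
    ST m c d hcd]
  abel

end Products

end BlockElim

/-! ### STATEMENT 2: block Gaussian elimination of `diag(I_{(m-1)n}, 0) + X(λ)Y(λ)`. -/

theorem block_elimination
    (m n : ℕ) (hm : 0 < m) (hn : 0 < n)
    (x y : Fin m → Matrix (Fin n) (Fin n) ℂ[X])
    (hx : ∀ i, x i = 0 ∨ ∃ p : ℕ, x i = (X : ℂ[X]) ^ p • (1 : Matrix (Fin n) (Fin n) ℂ[X]))
    (hy : ∀ i, y i = 0 ∨ ∃ q : ℕ, y i = (X : ℂ[X]) ^ q • (1 : Matrix (Fin n) (Fin n) ℂ[X]))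
    (hxy : ∀ i : Fin m, (i : ℕ) < m - 1 → x i * y i = 0) :
    ∃ L U : Matrix (BI m n) (BI m n) ℂ[X],
      BlockLowerUni m n L ∧ BlockUpperUni m n U ∧
      L * (diagZeroLast m n + Matrix.of fun p q => (x p.1 * y q.1) p.2 q.2) * U =
        diagLastP m n (x ⟨m - 1, by omega⟩ * y ⟨m - 1, by omega⟩) := by
  classical
  have hx' : ∀ i, ∃ ci : ℂ[X], x i = ci • (1 : Matrix (Fin n) (Fin n) ℂ[X]) := by
    intro i
    rcases hx i with h | ⟨p, h⟩
    · exact ⟨0, by simp [h]⟩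
    · exact ⟨X ^ p, h⟩
  have hy' : ∀ i, ∃ di : ℂ[X], y i = di • (1 : Matrix (Fin n) (Fin n) ℂ[X]) := by
    intro i
    rcases hy i with h | ⟨q, h⟩
    · exact ⟨0, by simp [h]⟩
    · exact ⟨X ^ q, h⟩
  choose c hc using hx'
  choose d hd using hy'
  have hmul : ∀ i j, x i * y j = (c i * d j) • (1 : Matrix (Fin n) (Fin n) ℂ[X]) := by
    intro i j
    rw [hc, hd, smul_mul_assoc, mul_smul_comm, one_mul, smul_smul]
  have hcd : ∀ i : Fin m, (i : ℕ) < m - 1 → c i * d i = 0 := by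
    intro i hi
    have h0 := hxy i hi
    rw [hmul] at h0
    have h1 := congrFun (congrFun h0 ⟨0, hn⟩) ⟨0, hn⟩
    simpa [Matrix.one_apply] using h1
  refine ⟨BlockElim.kron m n (1 - BlockElim.Sm m c d),
    BlockElim.kron m n (1 - BlockElim.Tm m c d), ⟨?_, ?_⟩, ⟨?_, ?_⟩, ?_⟩
  · intro p q hpq
    have h1 : p.1 ≠ q.1 := ne_of_lt hpq
    have h2 : ¬ q.1 < p.1 := asymm hpq
    simp [BlockElim.kron, BlockElim.Sm, Matrix.sub_apply, Matrix.one_apply, h1, h2]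
  · intro p q hpq
    simp [BlockElim.kron, BlockElim.Sm, Matrix.sub_apply, Matrix.one_apply, hpq, lt_irrefl]
  · intro p q hpq
    have h1 : p.1 ≠ q.1 := (ne_of_lt hpq).symm
    have h2 : ¬ p.1 < q.1 := asymm hpq
    simp [BlockElim.kron, BlockElim.Tm, Matrix.sub_apply, Matrix.one_apply, h1, h2]
  · intro p q hpq
    simp [BlockElim.kron, BlockElim.Tm, Matrix.sub_apply, Matrix.one_apply, hpq, lt_irrefl]
  · have hmid : (diagZeroLast m n + Matrix.of fun p q => (x p.1 * y q.1) p.2 q.2)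
        = BlockElim.kron m n (BlockElim.Dm m + BlockElim.Dl m c d +
            BlockElim.Sm m c d + BlockElim.Tm m c d) := by
      refine Matrix.ext fun p q => ?_
      obtain ⟨i, a⟩ := p
      obtain ⟨j, b⟩ := q
      simp only [diagZeroLast, BlockElim.kron, BlockElim.Dm, BlockElim.Dl, BlockElim.Sm,
        BlockElim.Tm, Matrix.add_apply, Matrix.of_apply, hmul, Matrix.smul_apply,
        Matrix.one_apply, smul_eq_mul, Prod.mk.injEq]
      by_cases hab : a = b
      · subst hab
        rcases lt_trichotomy i j with hij | hij | hij
        · simp [ne_of_lt hij, asymm hij, hij]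
        · subst hij
          by_cases hi : (i : ℕ) = m - 1
          · simp [hi, lt_irrefl]
          · have h0 := hcd i (by have := i.isLt; omega)
            simp [hi, lt_irrefl, h0]
        · simp [(ne_of_lt hij).symm, asymm hij, hij]
      · simp [hab]
    have hrhs : diagLastP m n (x ⟨m - 1, by omega⟩ * y ⟨m - 1, by omega⟩)
        = BlockElim.kron m n (BlockElim.Dm m + BlockElim.Dl m c d) := by
      refine Matrix.ext fun p q => ?_
      obtain ⟨i, a⟩ := p
      obtain ⟨j, b⟩ := q
      simp only [diagLastP, BlockElim.kron, BlockElim.Dm, BlockElim.Dl,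
        Matrix.add_apply, Matrix.of_apply, hmul, Matrix.smul_apply,
        Matrix.one_apply, smul_eq_mul, Prod.mk.injEq]
      by_cases hi : (i : ℕ) = m - 1
      · by_cases hj : (j : ℕ) = m - 1
        · have hij : i = j := Fin.ext (by omega)
          subst hij
          have hc' : ∀ h : m - 1 < m, c ⟨m - 1, h⟩ = c i := by
            intro h; congr 1; exact Fin.ext hi.symm
          have hd' : ∀ h : m - 1 < m, d ⟨m - 1, h⟩ = d i := by
            intro h; congr 1; exact Fin.ext hi.symm
          by_cases hab : a = b <;> simp [hi, hab, hc', hd']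
        · have hij : i ≠ j := fun h => hj (h ▸ hi)
          simp [hi, hj, hij]
      · by_cases hj : (j : ℕ) = m - 1
        · have hij : i ≠ j := fun h => hi (h ▸ hj.symm ▸ rfl)
          simp [hi, hj, hij]
        · by_cases hij : i = j
          · subst hij
            by_cases hab : a = b <;> simp [hi, hab]
          · simp [hi, hj, hij]
    rw [hmid, BlockElim.kron_mul, BlockElim.kron_mul, BlockElim.key m c d hcd]
    exact hrhs.symm

end RatLin
end
end

section
/- Let α be a permutation of {0,…,m−1} with RCISS(α) = (c_1,i_1,…,c_ℓ,i_ℓ), and let Λ_α(λ) and Ω_α(λ) be the associated mn×n and n×mn matrix polynomials. Then there exist an m×m-block lower block-triangular matrix polynomial T_1(λ) with all diagonal blocks I_n and an m×m-block upper block-triangular matrix polynomial T_2(λ) with all diagonal blocks I_n such that T_1(λ) (diag(I_{(m−1)n}, 0_n) + Λ_α(λ) Ω_α(λ)) T_2(λ) = diag(I_{(m−1)n}, λ^{m−1} I_n). -/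
open Polynomial Matrix
open scoped Classical

set_option synthInstance.maxHeartbeats 1000000
set_option maxHeartbeats 1000000

noncomputable section

namespace RatLin

/-! ### Auxiliary material for Statement 3 -/

section Aux

lemma sum_map_add_split (L : List (ℕ × ℕ)) :
    (L.map fun s => s.1 + s.2).sum = (L.map Prod.fst).sum + (L.map Prod.snd).sum := by
  induction L with
  | nil => simp
  | cons a t ih => simp only [List.map_cons, List.sum_cons, ih]; ring

lemma lamExp_total : ∀ (L : List (ℕ × ℕ)), L ≠ [] → ∀ acc : ℕ,
    lamExp L acc ((L.map fun s => s.1 + s.2).sum) = some (acc + (L.map Prod.fst).sum)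
  | [], h, _ => absurd rfl h
  | [(c, i)], _, acc => by
      simp only [List.map_cons, List.map_nil, List.sum_cons, List.sum_nil, lamExp,
        Nat.add_zero]
      rw [if_neg (by omega)]
      simp
  | (c, i) :: x :: t, _, acc => by
      have ih := lamExp_total (x :: t) (by simp) (acc + c)
      simp only [List.map_cons, List.sum_cons] at ih ⊢
      rw [lamExp]
      · rw [if_neg (by omega), if_neg (by omega)]
        rw [show c + i + ((x.1 + x.2) + (t.map fun s => s.1 + s.2).sum) - (c + i)
              = (x.1 + x.2) + (t.map fun s => s.1 + s.2).sum by omega]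
        rw [ih]; congr 1; omega
      · simp

lemma omExp_total : ∀ (L : List (ℕ × ℕ)), L ≠ [] → ∀ acc : ℕ,
    omExp L acc ((L.map fun s => s.1 + s.2).sum) = some (acc + (L.map Prod.snd).sum)
  | [], h, _ => absurd rfl h
  | [(c, i)], _, acc => by
      simp only [List.map_cons, List.map_nil, List.sum_cons, List.sum_nil, omExp,
        Nat.add_zero]
      rw [if_neg (by omega), if_neg (by omega)]
      simp
  | (c, i) :: x :: t, _, acc => by
      have ih := omExp_total (x :: t) (by simp) (acc + i)
      simp only [List.map_cons, List.sum_cons] at ih ⊢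
      rw [omExp]
      · rw [if_neg (by omega), if_neg (by omega)]
        rw [show c + i + ((x.1 + x.2) + (t.map fun s => s.1 + s.2).sum) - (c + i)
              = (x.1 + x.2) + (t.map fun s => s.1 + s.2).sum by omega]
        rw [ih]; congr 1; omega
      · simp

lemma exp_disjoint : ∀ (L : List (ℕ × ℕ)) (acc1 acc2 p : ℕ),
    p < (L.map fun s => s.1 + s.2).sum →
    lamExp L acc1 p = none ∨ omExp L acc2 p = none
  | [], _, _, _, h => by simp at h
  | [(c, i)], acc1, acc2, p, h => by
      simp only [List.map_cons, List.map_nil, List.sum_cons, List.sum_nil,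
        Nat.add_zero] at h
      by_cases hc : p < c
      · right; rw [omExp, if_pos hc]
      · left; rw [lamExp, if_neg hc, if_neg (by omega)]
  | (c, i) :: x :: t, acc1, acc2, p, h => by
      simp only [List.map_cons, List.sum_cons] at h
      by_cases hc : p < c
      · right
        rw [omExp]
        · rw [if_pos hc]
        · simp
      · by_cases hci : p < c + i
        · left
          rw [lamExp]
          · rw [if_neg hc, if_pos hci]
          · simp
        · have ih := exp_disjoint (x :: t) (acc1 + c) (acc2 + i) (p - (c + i))
            (by simp only [List.map_cons, List.sum_cons]; omega)
          rcases ih with ih | ih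
          · left
            rw [lamExp]
            · rw [if_neg hc, if_neg hci]; exact ih
            · simp
          · right
            rw [omExp]
            · rw [if_neg hc, if_neg hci]; exact ih
            · simp

/-- Scalar "row vector" extracted from `lamExp`. -/
def uOf (L : List (ℕ × ℕ)) (m : ℕ) : Fin m → ℂ[X] := fun p =>
  match lamExp L 0 (p : ℕ) with
  | some e => (X : ℂ[X]) ^ e
  | none => 0

/-- Scalar "column vector" extracted from `omExp`. -/
def vOf (L : List (ℕ × ℕ)) (m : ℕ) : Fin m → ℂ[X] := fun p =>
  match omExp L 0 (p : ℕ) with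
  | some e => (X : ℂ[X]) ^ e
  | none => 0

/-- Kronecker product with `I_n` of an `m × m` scalar matrix. -/
def kron (m n : ℕ) (g : Matrix (Fin m) (Fin m) ℂ[X]) : Matrix (BI m n) (BI m n) ℂ[X] :=
  Matrix.of fun p q => if p.2 = q.2 then g p.1 q.1 else 0

lemma kron_add (m n : ℕ) (g h : Matrix (Fin m) (Fin m) ℂ[X]) :
    kron m n g + kron m n h = kron m n (g + h) := by
  apply Matrix.ext; intro p q
  simp only [kron, Matrix.add_apply, Matrix.of_apply]
  split <;> simp

lemma kron_mul (m n : ℕ) (g h : Matrix (Fin m) (Fin m) ℂ[X]) :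
    kron m n g * kron m n h = kron m n (g * h) := by
  apply Matrix.ext; intro p q
  obtain ⟨p1, p2⟩ := p
  obtain ⟨q1, q2⟩ := q
  simp only [kron, Matrix.mul_apply, Matrix.of_apply, Fintype.sum_prod_type,
    ite_mul, mul_ite, zero_mul, mul_zero]
  rw [Finset.sum_comm]
  by_cases h2 : p2 = q2
  · subst h2
    rw [if_pos rfl, Finset.sum_eq_single p2]
    · simp
    · intro y _ hy
      apply Finset.sum_eq_zero
      intro x _
      rw [if_neg hy]
    · intro hmem
      exact absurd (Finset.mem_univ p2) hmem
  · rw [if_neg h2]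
    apply Finset.sum_eq_zero
    intro y _
    apply Finset.sum_eq_zero
    intro x _
    by_cases hy : y = q2
    · subst hy
      rw [if_pos rfl, if_neg h2]
    · rw [if_neg hy]

/-- Strictly lower part of the dyad. -/
def Aof {m : ℕ} (u v : Fin m → ℂ[X]) : Matrix (Fin m) (Fin m) ℂ[X] :=
  Matrix.of fun p q => if q < p then u p * v q else 0

/-- Strictly upper part of the dyad. -/
def Bof {m : ℕ} (u v : Fin m → ℂ[X]) : Matrix (Fin m) (Fin m) ℂ[X] :=
  Matrix.of fun p q => if p < q then u p * v q else 0

/-- The full dyad. -/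
def Wof {m : ℕ} (u v : Fin m → ℂ[X]) : Matrix (Fin m) (Fin m) ℂ[X] :=
  Matrix.of fun p q => u p * v q

/-- `diag(1,…,1,0)`. -/
def Dof (m : ℕ) : Matrix (Fin m) (Fin m) ℂ[X] :=
  Matrix.of fun p q => if p = q ∧ (p : ℕ) ≠ m - 1 then 1 else 0

/-- `diag(1,…,1,λ^{m-1})`. -/
def Fof (m : ℕ) : Matrix (Fin m) (Fin m) ℂ[X] :=
  Matrix.of fun p q => if p = q then (if (p : ℕ) = m - 1 then (X : ℂ[X]) ^ (m - 1) else 1) else 0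

section Scalar

variable {m : ℕ} (u v : Fin m → ℂ[X])
  (h0 : ∀ r : Fin m, (r : ℕ) ≠ m - 1 → u r * v r = 0)

lemma fin_lt_pred {p r : Fin m} (h : r < p) : (r : ℕ) ≠ m - 1 := by
  have := p.isLt; have := Fin.lt_iff_val_lt_val.mp h; omega

include h0 in
lemma AN_eq : Aof u v * (Dof m + Wof u v) = Aof u v := by
  apply Matrix.ext; intro p q
  rw [Matrix.mul_apply]
  have hz : ∀ r ∈ Finset.univ, r ≠ q →
      (Aof u v) p r * (Dof m + Wof u v) r q = 0 := by
    intro r _ hrq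
    by_cases hr : r < p
    · have hur : u r * v r = 0 := h0 r (fin_lt_pred hr)
      have hDr : Dof m r q = 0 := by simp [Dof, hrq]
      have hWr : Wof u v r q = u r * v q := rfl
      simp only [Matrix.add_apply, hDr, hWr, Aof, Matrix.of_apply, if_pos hr]
      rw [zero_add]
      calc u p * v r * (u r * v q) = u p * (u r * v r) * v q := by ring
        _ = 0 := by rw [hur]; ring
    · simp only [Aof, Matrix.of_apply, if_neg hr, zero_mul]
  rw [Finset.sum_eq_single_of_mem q (Finset.mem_univ q) hz]
  by_cases hq : q < p
  · have huq : u q * v q = 0 := h0 q (fin_lt_pred hq)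
    have hDq : Dof m q q = 1 := by simp [Dof, fin_lt_pred hq]
    have hWq : Wof u v q q = u q * v q := rfl
    simp only [Matrix.add_apply, hDq, hWq, Aof, Matrix.of_apply, if_pos hq]
    calc u p * v q * (1 + u q * v q) = u p * v q + u q * v q * (u p * v q) := by ring
      _ = u p * v q := by rw [huq]; ring
  · simp only [Aof, Matrix.of_apply, if_neg hq, zero_mul]

include h0 in
lemma NB_eq : (Dof m + Wof u v) * Bof u v = Bof u v := by
  apply Matrix.ext; intro p q
  rw [Matrix.mul_apply]
  have hz : ∀ r ∈ Finset.univ, r ≠ p →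
      (Dof m + Wof u v) p r * (Bof u v) r q = 0 := by
    intro r _ hrp
    by_cases hr : r < q
    · have hur : u r * v r = 0 := h0 r (fin_lt_pred hr)
      have hDr : Dof m p r = 0 := by simp [Dof, Ne.symm hrp]
      have hWr : Wof u v p r = u p * v r := rfl
      simp only [Matrix.add_apply, hDr, hWr, Bof, Matrix.of_apply, if_pos hr]
      rw [zero_add]
      calc u p * v r * (u r * v q) = u p * (u r * v r) * v q := by ring
        _ = 0 := by rw [hur]; ring
    · simp only [Bof, Matrix.of_apply, if_neg hr, mul_zero]
  rw [Finset.sum_eq_single_of_mem p (Finset.mem_univ p) hz]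
  by_cases hq : p < q
  · have hup : u p * v p = 0 := h0 p (fin_lt_pred hq)
    have hDp : Dof m p p = 1 := by simp [Dof, fin_lt_pred hq]
    have hWp : Wof u v p p = u p * v p := rfl
    simp only [Matrix.add_apply, hDp, hWp, Bof, Matrix.of_apply, if_pos hq]
    calc (1 + u p * v p) * (u p * v q) = u p * v q + u p * v p * (u p * v q) := by ring
      _ = u p * v q := by rw [hup]; ring
  · simp only [Bof, Matrix.of_apply, if_neg hq, mul_zero]

include h0 in
lemma AB_eq : Aof u v * Bof u v = 0 := by
  apply Matrix.ext; intro p q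
  rw [Matrix.mul_apply]
  rw [Matrix.zero_apply]
  apply Finset.sum_eq_zero
  intro r _
  by_cases hr1 : r < p
  · by_cases hr2 : r < q
    · have hur : u r * v r = 0 := h0 r (fin_lt_pred hr1)
      simp only [Aof, Bof, Matrix.of_apply, if_pos hr1, if_pos hr2]
      calc u p * v r * (u r * v q) = u p * (u r * v r) * v q := by ring
        _ = 0 := by rw [hur]; ring
    · simp only [Bof, Matrix.of_apply, if_neg hr2, mul_zero]
  · simp only [Aof, Matrix.of_apply, if_neg hr1, zero_mul]

end Scalar

lemma scalar_main {m : ℕ} (hm : 2 ≤ m) (u v : Fin m → ℂ[X])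
    (h0 : ∀ r : Fin m, (r : ℕ) ≠ m - 1 → u r * v r = 0)
    (h1 : ∀ r : Fin m, (r : ℕ) = m - 1 → u r * v r = (X : ℂ[X]) ^ (m - 1)) :
    (1 - Aof u v) * (Dof m + Wof u v) * (1 - Bof u v) = Fof m := by
  have hAN := AN_eq u v h0
  have hNB := NB_eq u v h0
  have hAB := AB_eq u v h0
  have expand : (1 - Aof u v) * (Dof m + Wof u v) * (1 - Bof u v)
      = (Dof m + Wof u v) - (Dof m + Wof u v) * Bof u v
        - (Aof u v * (Dof m + Wof u v) - Aof u v * (Dof m + Wof u v) * Bof u v) := by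
    noncomm_ring
  rw [expand, hAN, hNB, hAB, sub_zero]
  apply Matrix.ext; intro p q
  simp only [Matrix.sub_apply, Matrix.add_apply]
  have hW : Wof u v p q = u p * v q := rfl
  rcases lt_trichotomy p q with h | h | h
  · have hD : Dof m p q = 0 := by simp [Dof, Fin.ne_of_lt h]
    have hA : Aof u v p q = 0 := by simp [Aof, not_lt_of_gt h]
    have hB : Bof u v p q = u p * v q := by simp [Bof, h]
    have hF : Fof m p q = 0 := by simp [Fof, Fin.ne_of_lt h]
    rw [hD, hA, hB, hW, hF]; ring
  · subst h
    have hA : Aof u v p p = 0 := by simp [Aof]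
    have hB : Bof u v p p = 0 := by simp [Bof]
    by_cases hp : (p : ℕ) = m - 1
    · have hD : Dof m p p = 0 := by simp [Dof, hp]
      have hF : Fof m p p = (X : ℂ[X]) ^ (m - 1) := by simp [Fof, hp]
      rw [hD, hA, hB, hW, h1 p hp, hF]; ring
    · have hD : Dof m p p = 1 := by simp [Dof, hp]
      have hF : Fof m p p = 1 := by simp [Fof, hp]
      rw [hD, hA, hB, hW, h0 p hp, hF]; ring
  · have hD : Dof m p q = 0 := by simp [Dof, Fin.ne_of_gt h]
    have hA : Aof u v p q = u p * v q := by simp [Aof, h]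
    have hB : Bof u v p q = 0 := by simp [Bof, not_lt_of_gt h]
    have hF : Fof m p q = 0 := by simp [Fof, Fin.ne_of_gt h]
    rw [hD, hA, hB, hW, hF]; ring

end Aux

/-! ### STATEMENT 3: block triangular reduction of `diag(I_{(m-1)n}, 0) + Λ_α(λ) Ω_α(λ)`. -/

theorem lambda_omega_elimination
    (m n : ℕ) (hm : 2 ≤ m) (hn : 0 < n)
    (α : List ℤ) (hα : PermOn α 0 m)
    (L : List (ℕ × ℕ)) (hL : L ≠ []) (hRCISS : IsRCISS m α L) :
    ∃ T1 T2 : Matrix (BI m n) (BI m n) ℂ[X],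
      BlockLowerUni m n T1 ∧ BlockUpperUni m n T2 ∧
      T1 * (diagZeroLast m n + LamMat m n L * OmMat m n L) * T2 =
        diagLastP m n ((X : ℂ[X]) ^ (m - 1) • (1 : Matrix (Fin n) (Fin n) ℂ[X])) := by
  classical
  set u : Fin m → ℂ[X] := uOf L m with hu
  set v : Fin m → ℂ[X] := vOf L m with hv
  have hsum : (L.map fun s => s.1 + s.2).sum = m - 1 := hRCISS.1
  have h0 : ∀ r : Fin m, (r : ℕ) ≠ m - 1 → u r * v r = 0 := by
    intro r hr
    have hlt : (r : ℕ) < (L.map fun s => s.1 + s.2).sum := by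
      have := r.isLt; omega
    rcases exp_disjoint L 0 0 r hlt with h | h
    · have : u r = 0 := by simp [hu, uOf, h]
      rw [this, zero_mul]
    · have : v r = 0 := by simp [hv, vOf, h]
      rw [this, mul_zero]
  have h1 : ∀ r : Fin m, (r : ℕ) = m - 1 → u r * v r = (X : ℂ[X]) ^ (m - 1) := by
    intro r hr
    have hl := lamExp_total L hL 0
    have ho := omExp_total L hL 0
    rw [hsum] at hl ho
    rw [← hr] at hl ho
    have hul : u r = (X : ℂ[X]) ^ (L.map Prod.fst).sum := by simp [hu, uOf, hl]
    have hvl : v r = (X : ℂ[X]) ^ (L.map Prod.snd).sum := by simp [hv, vOf, ho]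
    rw [hul, hvl, ← pow_add]
    congr 1
    have hsplit := sum_map_add_split L
    omega
  -- the two unimodular factors
  refine ⟨kron m n (1 - Aof u v), kron m n (1 - Bof u v), ?_, ?_, ?_⟩
  · constructor
    · intro p q hpq
      have hA : Aof u v p.1 q.1 = 0 := by
        simp only [Aof, Matrix.of_apply]
        rw [if_neg (by exact fun h => absurd (lt_trans h hpq) (lt_irrefl _))]
      simp [kron, Matrix.sub_apply, Matrix.one_apply, Fin.ne_of_lt hpq, hA]
    · intro p q hpq
      have hA : Aof u v q.1 q.1 = 0 := by simp [Aof]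
      simp [kron, Matrix.sub_apply, Matrix.one_apply, hpq, hA]
  · constructor
    · intro p q hpq
      have hB : Bof u v p.1 q.1 = 0 := by
        simp only [Bof, Matrix.of_apply]
        rw [if_neg (by exact fun h => absurd (lt_trans h hpq) (lt_irrefl _))]
      simp [kron, Matrix.sub_apply, Matrix.one_apply, Fin.ne_of_gt hpq, hB]
    · intro p q hpq
      have hB : Bof u v q.1 q.1 = 0 := by simp [Bof]
      simp [kron, Matrix.sub_apply, Matrix.one_apply, hpq, hB]
  · have hD : diagZeroLast m n = kron m n (Dof m) := by
      ext p q
      by_cases h1' : p.1 = q.1 <;> by_cases h2 : p.2 = q.2 <;>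
        simp [diagZeroLast, kron, Dof, Prod.ext_iff, h1', h2]
    have hlam : ∀ (p : BI m n) (b : Fin n),
        LamMat m n L p b = if p.2 = b then u p.1 else 0 := by
      intro p b
      rcases h : lamExp L 0 (p.1 : ℕ) with _ | e <;>
        simp [LamMat, hu, uOf, h]
    have hom : ∀ (a : Fin n) (q : BI m n),
        OmMat m n L a q = if a = q.2 then v q.1 else 0 := by
      intro a q
      rcases h : omExp L 0 (q.1 : ℕ) with _ | e <;>
        simp [OmMat, hv, vOf, h]
    have hW : LamMat m n L * OmMat m n L = kron m n (Wof u v) := by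
      ext p q
      rw [Matrix.mul_apply]
      simp only [hlam, hom, kron, Wof, Matrix.of_apply, ite_mul, mul_ite,
        zero_mul, mul_zero]
      simp [Finset.sum_ite_eq, Finset.sum_ite_eq']
    have hF : diagLastP m n ((X : ℂ[X]) ^ (m - 1) • (1 : Matrix (Fin n) (Fin n) ℂ[X]))
        = kron m n (Fof m) := by
      apply Matrix.ext; intro p q
      simp only [diagLastP, kron, Fof, Matrix.of_apply, Matrix.smul_apply,
        Matrix.one_apply, smul_eq_mul]
      by_cases hp : (p.1 : ℕ) = m - 1 <;> by_cases hq : (q.1 : ℕ) = m - 1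
      · have h11 : p.1 = q.1 := Fin.ext (by omega)
        by_cases h2 : p.2 = q.2 <;> simp [hp, hq, h11, h2]
      · have h11 : p.1 ≠ q.1 := fun h => hq (by rw [← h]; exact hp)
        have hne : p ≠ q := fun h => h11 (congrArg Prod.fst h)
        simp [hp, hq, h11, hne]
      · have h11 : p.1 ≠ q.1 := fun h => hp (by rw [h]; exact hq)
        have hne : p ≠ q := fun h => h11 (congrArg Prod.fst h)
        simp [hp, hq, h11, hne]
      · by_cases h11 : p.1 = q.1 <;> by_cases h2 : p.2 = q.2 <;>
          simp [hp, hq, h11, h2, Prod.ext_iff]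
    rw [hD, hW, kron_add, kron_mul, kron_mul, scalar_main hm u v h0 h1, hF]

end RatLin
end
end
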